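/- arXiv:2512.10929 — 3 statements merged into one kernel-verified Lean document; each statement's English description precedes it below -/
import Mathlib

section
/- For any n-qubit pure state |φ⟩ and λ ∈ [0,1], tr(|φ⟩⟨φ|^{⊗2} · (D_λ^{⊗n} ⊗ D_λ^{⊗n})(SWAP_n)) ≤ (1 − λ + λ²/2)^n, where SWAP_n is the n-fold tensor product of single-qubit swaps between the two copies. -/
open Matrix

/-- The single-qubit depolarizing channel of strength `lam` applied to qubit `i`
of a register of qubits indexed by `ι`:
`D_λ at i (M) = (1−λ)·M + (λ/2)·(I_i ⊗ tr_i M)`. -/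
noncomputable def depolAt {ι : Type} [DecidableEq ι] [Fintype ι] (lam : ℝ) (i : ι)
    (M : Matrix (ι → Fin 2) (ι → Fin 2) ℂ) : Matrix (ι → Fin 2) (ι → Fin 2) ℂ :=
  ((1 - lam : ℝ) : ℂ) • M + ((lam / 2 : ℝ) : ℂ) •
    Matrix.of (fun x y =>
      if x i = y i then ∑ b : Fin 2, M (Function.update x i b) (Function.update y i b) else 0)

/-- The tensor-product depolarizing channel `D_λ^{⊗ι}`, applying the single-qubit
depolarizing channel to every qubit of the register. -/
noncomputable def depolAll {ι : Type} [DecidableEq ι] [Fintype ι] (lam : ℝ)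
    (M : Matrix (ι → Fin 2) (ι → Fin 2) ℂ) : Matrix (ι → Fin 2) (ι → Fin 2) ℂ :=
  (Finset.univ : Finset ι).toList.foldl (fun N i => depolAt lam i N) M

/-- `SWAP_n`, the operator exchanging two copies of the `n`-qubit register
(qubit `inl i` of the first copy is swapped with qubit `inr i` of the second). -/
noncomputable def swapN (n : ℕ) :
    Matrix ((Fin n ⊕ Fin n) → Fin 2) ((Fin n ⊕ Fin n) → Fin 2) ℂ :=
  Matrix.of fun x y => if x = y ∘ Sum.swap then 1 else 0

/-- Two copies of the pure state `|φ⟩⟨φ|`, i.e. `|φ⟩⟨φ|^{⊗2}`, as an operator on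
the doubled register. -/
noncomputable def pureTwoCopies {n : ℕ} (φ : (Fin n → Fin 2) → ℂ) :
    Matrix ((Fin n ⊕ Fin n) → Fin 2) ((Fin n ⊕ Fin n) → Fin 2) ℂ :=
  Matrix.of fun x y =>
    (φ (x ∘ Sum.inl) * star (φ (y ∘ Sum.inl))) * (φ (x ∘ Sum.inr) * star (φ (y ∘ Sum.inr)))

noncomputable def alF (lam : ℝ) (m : ℕ) : ℝ := (1 - lam) ^ m

noncomputable def beF (lam : ℝ) : ℕ → ℝ
  | 0 => 0
  | m + 1 => (1 - lam) * beF lam m + lam / 2 * ((1 - lam) ^ m + 2 * beF lam m)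

/-- a single-pair factor -/
noncomputable def facF (lam : ℝ) (m : ℕ) (a b c d : Fin 2) : ℂ :=
  ((alF lam m : ℝ) : ℂ) * (if a = d ∧ b = c then 1 else 0)
    + ((beF lam m : ℝ) : ℂ) * (if a = c ∧ b = d then 1 else 0)

noncomputable def Fmat (lam : ℝ) (n : ℕ) (g : Fin n → ℕ) :
    Matrix ((Fin n ⊕ Fin n) → Fin 2) ((Fin n ⊕ Fin n) → Fin 2) ℂ :=
  Matrix.of fun x y => ∏ k : Fin n,
    facF lam (g k) (x (Sum.inl k)) (x (Sum.inr k)) (y (Sum.inl k)) (y (Sum.inr k))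

lemma fac_step_left (lam : ℝ) (m : ℕ) (a b0 c d : Fin 2) :
    ((1 - lam : ℝ) : ℂ) * facF lam m a b0 c d
      + ((lam / 2 : ℝ) : ℂ) *
        (if a = c then ∑ b : Fin 2, facF lam m b b0 b d else 0)
    = facF lam (m + 1) a b0 c d := by
  have hbe : beF lam (m+1) = (1 - lam) * beF lam m + lam / 2 * ((1 - lam) ^ m + 2 * beF lam m) := rfl
  simp only [facF, Fin.sum_univ_two, alF, hbe, pow_succ]
  fin_cases a <;> fin_cases b0 <;> fin_cases c <;> fin_cases d <;>
    simp <;> (try left) <;> (first | trivial | ring | (push_cast; (first | trivial | ring)))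

lemma fac_step_right (lam : ℝ) (m : ℕ) (a b0 c d : Fin 2) :
    ((1 - lam : ℝ) : ℂ) * facF lam m a b0 c d
      + ((lam / 2 : ℝ) : ℂ) *
        (if b0 = d then ∑ b : Fin 2, facF lam m a b c b else 0)
    = facF lam (m + 1) a b0 c d := by
  have hbe : beF lam (m+1) = (1 - lam) * beF lam m + lam / 2 * ((1 - lam) ^ m + 2 * beF lam m) := rfl
  simp only [facF, Fin.sum_univ_two, alF, hbe, pow_succ]
  fin_cases a <;> fin_cases b0 <;> fin_cases c <;> fin_cases d <;>
    simp <;> (try left) <;> (first | trivial | ring | (push_cast; (first | trivial | ring)))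

lemma depolAt_Fmat (lam : ℝ) (n : ℕ) (g : Fin n → ℕ) (i : Fin n ⊕ Fin n) :
    depolAt lam i (Fmat lam n g) =
      Fmat lam n (Function.update g (Sum.elim id id i) (g (Sum.elim id id i) + 1)) := by
  obtain k | k := i <;> ext x y <;>
    simp only [depolAt, Fmat, Matrix.add_apply, Matrix.smul_apply, Matrix.of_apply,
      smul_eq_mul, Sum.elim_inl, Sum.elim_inr, id_eq]
  · -- i = inl k
    set P : ℂ := ∏ k' ∈ Finset.univ.erase k,
      facF lam (g k') (x (Sum.inl k')) (x (Sum.inr k')) (y (Sum.inl k')) (y (Sum.inr k')) with hP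
    have h1 : (∏ k' : Fin n,
        facF lam (g k') (x (Sum.inl k')) (x (Sum.inr k')) (y (Sum.inl k')) (y (Sum.inr k')))
        = facF lam (g k) (x (Sum.inl k)) (x (Sum.inr k)) (y (Sum.inl k)) (y (Sum.inr k)) * P :=
      (Finset.mul_prod_erase _ _ (Finset.mem_univ k)).symm
    have h2 : ∀ b : Fin 2, (∏ k' : Fin n,
        facF lam (g k') ((Function.update x (Sum.inl k) b) (Sum.inl k'))
          ((Function.update x (Sum.inl k) b) (Sum.inr k'))
          ((Function.update y (Sum.inl k) b) (Sum.inl k'))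
          ((Function.update y (Sum.inl k) b) (Sum.inr k')))
        = facF lam (g k) b (x (Sum.inr k)) b (y (Sum.inr k)) * P := by
      intro b
      rw [← Finset.mul_prod_erase _ _ (Finset.mem_univ k)]
      congr 1
      · simp [Function.update]
      · refine Finset.prod_congr rfl fun k' hk' => ?_
        have hne : k' ≠ k := Finset.ne_of_mem_erase hk'
        rw [Function.update_of_ne (by simp [hne]), Function.update_of_ne (by simp),
          Function.update_of_ne (by simp [hne]), Function.update_of_ne (by simp)]
    have h3 : (∏ k' : Fin n,
        facF lam (Function.update g k (g k + 1) k') (x (Sum.inl k')) (x (Sum.inr k'))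
          (y (Sum.inl k')) (y (Sum.inr k')))
        = facF lam (g k + 1) (x (Sum.inl k)) (x (Sum.inr k)) (y (Sum.inl k)) (y (Sum.inr k)) * P := by
      rw [← Finset.mul_prod_erase _ _ (Finset.mem_univ k)]
      congr 1
      · simp
      · refine Finset.prod_congr rfl fun k' hk' => ?_
        rw [Function.update_of_ne (Finset.ne_of_mem_erase hk')]
    rw [h1, h3]
    simp only [h2]
    rw [← Finset.sum_mul, ← zero_mul P, ← ite_mul]
    have := fac_step_left lam (g k) (x (Sum.inl k)) (x (Sum.inr k)) (y (Sum.inl k)) (y (Sum.inr k))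
    linear_combination P * this
  · -- i = inr k
    set P : ℂ := ∏ k' ∈ Finset.univ.erase k,
      facF lam (g k') (x (Sum.inl k')) (x (Sum.inr k')) (y (Sum.inl k')) (y (Sum.inr k')) with hP
    have h1 : (∏ k' : Fin n,
        facF lam (g k') (x (Sum.inl k')) (x (Sum.inr k')) (y (Sum.inl k')) (y (Sum.inr k')))
        = facF lam (g k) (x (Sum.inl k)) (x (Sum.inr k)) (y (Sum.inl k)) (y (Sum.inr k)) * P :=
      (Finset.mul_prod_erase _ _ (Finset.mem_univ k)).symm
    have h2 : ∀ b : Fin 2, (∏ k' : Fin n,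
        facF lam (g k') ((Function.update x (Sum.inr k) b) (Sum.inl k'))
          ((Function.update x (Sum.inr k) b) (Sum.inr k'))
          ((Function.update y (Sum.inr k) b) (Sum.inl k'))
          ((Function.update y (Sum.inr k) b) (Sum.inr k')))
        = facF lam (g k) (x (Sum.inl k)) b (y (Sum.inl k)) b * P := by
      intro b
      rw [← Finset.mul_prod_erase _ _ (Finset.mem_univ k)]
      congr 1
      · simp [Function.update]
      · refine Finset.prod_congr rfl fun k' hk' => ?_
        have hne : k' ≠ k := Finset.ne_of_mem_erase hk'
        rw [Function.update_of_ne (by simp), Function.update_of_ne (by simp [hne]),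
          Function.update_of_ne (by simp), Function.update_of_ne (by simp [hne])]
    have h3 : (∏ k' : Fin n,
        facF lam (Function.update g k (g k + 1) k') (x (Sum.inl k')) (x (Sum.inr k'))
          (y (Sum.inl k')) (y (Sum.inr k')))
        = facF lam (g k + 1) (x (Sum.inl k)) (x (Sum.inr k)) (y (Sum.inl k)) (y (Sum.inr k)) * P := by
      rw [← Finset.mul_prod_erase _ _ (Finset.mem_univ k)]
      congr 1
      · simp
      · refine Finset.prod_congr rfl fun k' hk' => ?_
        rw [Function.update_of_ne (Finset.ne_of_mem_erase hk')]
    rw [h1, h3]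
    simp only [h2]
    rw [← Finset.sum_mul, ← zero_mul P, ← ite_mul]
    have := fac_step_right lam (g k) (x (Sum.inl k)) (x (Sum.inr k)) (y (Sum.inl k)) (y (Sum.inr k))
    linear_combination P * this

lemma swapN_eq_Fmat (lam : ℝ) (n : ℕ) : swapN n = Fmat lam n (fun _ => 0) := by
  ext x y
  simp only [swapN, Fmat, Matrix.of_apply, facF, alF, beF, pow_zero, Complex.ofReal_one,
    Complex.ofReal_zero, one_mul, zero_mul, add_zero]
  rw [Finset.prod_boole]
  congr 1
  simp only [Finset.mem_univ, forall_true_left, eq_iff_iff]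
  constructor
  · intro h k
    subst h
    exact ⟨rfl, rfl⟩
  · intro h
    funext j
    obtain k | k := j
    · exact (h k).1
    · exact (h k).2

lemma foldl_depol (lam : ℝ) (n : ℕ) (l : List (Fin n ⊕ Fin n)) (g : Fin n → ℕ) :
    l.foldl (fun N i => depolAt lam i N) (Fmat lam n g) =
      Fmat lam n (fun k => g k + @List.count _ instBEqOfDecidableEq (Sum.inl k) l
        + @List.count _ instBEqOfDecidableEq (Sum.inr k) l) := by
  induction l generalizing g with
  | nil => simp
  | cons a l ih =>
    rw [List.foldl_cons, depolAt_Fmat, ih]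
    refine congrArg (Fmat lam n) ?_
    funext k0
    obtain j | j := a <;> by_cases hk : k0 = j <;>
      simp [List.count_cons, Function.update_apply, hk] <;> omega

lemma depolAll_swapN (lam : ℝ) (n : ℕ) :
    depolAll lam (swapN n) = Fmat lam n (fun _ => 2) := by
  rw [depolAll, swapN_eq_Fmat lam n, foldl_depol]
  have h2 : (fun k => 0 + @List.count _ instBEqOfDecidableEq (Sum.inl k) (Finset.univ : Finset (Fin n ⊕ Fin n)).toList
      + @List.count _ instBEqOfDecidableEq (Sum.inr k) (Finset.univ : Finset (Fin n ⊕ Fin n)).toList) = fun _ : Fin n => 2 := by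
    funext k
    rw [@List.count_eq_one_of_mem _ instBEqOfDecidableEq _ _ _ (Finset.nodup_toList _) (Finset.mem_toList.mpr (Finset.mem_univ _)),
    @List.count_eq_one_of_mem _ instBEqOfDecidableEq _ _ _ (Finset.nodup_toList _) (Finset.mem_toList.mpr (Finset.mem_univ _))]
  rw [h2]

lemma tT_bound (n : ℕ) (φ : (Fin n → Fin 2) → ℂ) (hφ : ∑ x, φ x * star (φ x) = 1)
    (T : Finset (Fin n)) :
    (∑ x : (Fin n ⊕ Fin n) → Fin 2, ∑ y : (Fin n ⊕ Fin n) → Fin 2,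
      pureTwoCopies φ x y *
        ((∏ k ∈ T, if y (Sum.inl k) = x (Sum.inr k) ∧ y (Sum.inr k) = x (Sum.inl k)
            then (1:ℂ) else 0) *
         (∏ k ∈ Finset.univ \ T, if y (Sum.inl k) = x (Sum.inl k) ∧ y (Sum.inr k) = x (Sum.inr k)
            then (1:ℂ) else 0))).re ≤ 1 := by
  classical
  -- the unique y making the indicator nonzero
  set tfun : ((Fin n ⊕ Fin n) → Fin 2) → ((Fin n ⊕ Fin n) → Fin 2) :=
    fun x => Sum.elim (fun k => if k ∈ T then x (Sum.inr k) else x (Sum.inl k))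
      (fun k => if k ∈ T then x (Sum.inl k) else x (Sum.inr k)) with htfun
  have hind : ∀ x y : (Fin n ⊕ Fin n) → Fin 2,
      ((∏ k ∈ T, if y (Sum.inl k) = x (Sum.inr k) ∧ y (Sum.inr k) = x (Sum.inl k)
          then (1:ℂ) else 0) *
       (∏ k ∈ Finset.univ \ T, if y (Sum.inl k) = x (Sum.inl k) ∧ y (Sum.inr k) = x (Sum.inr k)
          then (1:ℂ) else 0)) = if y = tfun x then 1 else 0 := by
    intro x y
    rw [Finset.prod_boole, Finset.prod_boole]
    have hiff : ((∀ k ∈ T, y (Sum.inl k) = x (Sum.inr k) ∧ y (Sum.inr k) = x (Sum.inl k)) ∧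
        (∀ k ∈ Finset.univ \ T, y (Sum.inl k) = x (Sum.inl k) ∧ y (Sum.inr k) = x (Sum.inr k)))
        ↔ y = tfun x := by
      constructor
      · rintro ⟨hT, hc⟩
        funext j
        obtain k | k := j
        · by_cases hk : k ∈ T
          · simpa [htfun, hk] using (hT k hk).1
          · simpa [htfun, hk] using (hc k (by simp [hk])).1
        · by_cases hk : k ∈ T
          · simpa [htfun, hk] using (hT k hk).2
          · simpa [htfun, hk] using (hc k (by simp [hk])).2
      · rintro rfl
        constructor
        · intro k hk
          constructor <;> simp [htfun, hk]
        · intro k hk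
          rw [Finset.mem_sdiff] at hk
          constructor <;> simp [htfun, hk.2]
    by_cases h : y = tfun x
    · obtain ⟨hA, hB⟩ := hiff.mpr h
      rw [if_pos hA, if_pos hB, if_pos h, one_mul]
    · rw [if_neg h]
      rcases not_and_or.mp (fun hab => h (hiff.mp hab)) with hA | hB
      · rw [if_neg hA, zero_mul]
      · rw [if_neg hB, mul_zero]
  simp only [hind]
  have hsum : ∀ x : (Fin n ⊕ Fin n) → Fin 2,
      (∑ y : (Fin n ⊕ Fin n) → Fin 2, pureTwoCopies φ x y * if y = tfun x then 1 else 0)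
        = pureTwoCopies φ x (tfun x) := by
    intro x
    simp [mul_ite, mul_one, mul_zero, Finset.sum_ite_eq']
  simp only [hsum]
  -- reindex the doubled register as a pair of registers
  set E := Equiv.sumArrowEquivProdArrow (Fin n) (Fin n) (Fin 2) with hE
  rw [← E.symm.sum_comp (fun x => pureTwoCopies φ x (tfun x)), Fintype.sum_prod_type]
  have hP : ∀ u v : Fin n → Fin 2,
      pureTwoCopies φ (E.symm (u, v)) (tfun (E.symm (u, v)))
        = (φ u * star (φ (T.piecewise v u))) * (φ v * star (φ (T.piecewise u v))) := by
    intro u v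
    have h1 : (E.symm (u, v)) ∘ Sum.inl = u := rfl
    have h2 : (E.symm (u, v)) ∘ Sum.inr = v := rfl
    have h3 : (tfun (E.symm (u, v))) ∘ Sum.inl = T.piecewise v u := by
      funext k; by_cases hk : k ∈ T <;> simp [htfun, hE, Finset.piecewise, hk,
        Equiv.sumArrowEquivProdArrow]
    have h4 : (tfun (E.symm (u, v))) ∘ Sum.inr = T.piecewise u v := by
      funext k; by_cases hk : k ∈ T <;> simp [htfun, hE, Finset.piecewise, hk,
        Equiv.sumArrowEquivProdArrow]
    simp only [pureTwoCopies, Matrix.of_apply, h1, h2, h3, h4]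
  simp only [hP]
  -- split each register into the T part and the rest
  set E2 := Equiv.piEquivPiSubtypeProd (fun i => i ∈ T) (fun _ => Fin 2) with hE2
  set ψ : ({ i // i ∈ T } → Fin 2) → ({ i // ¬ i ∈ T } → Fin 2) → ℂ :=
    fun s c => φ (E2.symm (s, c)) with hψ
  have hpw : ∀ s s' c c', T.piecewise (E2.symm (s', c')) (E2.symm (s, c)) = E2.symm (s', c) := by
    intro s s' c c'
    funext i
    by_cases h : i ∈ T <;>
      simp [Finset.piecewise, h, hE2, Equiv.piEquivPiSubtypeProd]
  have hu : ∀ {M : Type} [AddCommMonoid M] (h : (Fin n → Fin 2) → M),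
      (∑ u, h u) = ∑ s, ∑ c, h (E2.symm (s, c)) := by
    intro M _ h
    rw [← E2.symm.sum_comp h, Fintype.sum_prod_type]
  set ρ : ({ i // i ∈ T } → Fin 2) → ({ i // i ∈ T } → Fin 2) → ℂ :=
    fun s s' => ∑ c, ψ s c * star (ψ s' c) with hρdef
  have step1 : (∑ u : Fin n → Fin 2, ∑ v : Fin n → Fin 2,
      (φ u * star (φ (T.piecewise v u))) * (φ v * star (φ (T.piecewise u v))))
      = ∑ s, ∑ s', ρ s s' * ρ s' s := by
    rw [hu]
    refine Finset.sum_congr rfl fun s _ => ?_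
    calc (∑ c, ∑ v : Fin n → Fin 2,
          (φ (E2.symm (s, c)) * star (φ (T.piecewise v (E2.symm (s, c))))) *
            (φ v * star (φ (T.piecewise (E2.symm (s, c)) v))))
        = ∑ c, ∑ s', ∑ c', (ψ s c * star (ψ s' c)) * (ψ s' c' * star (ψ s c')) := by
          refine Finset.sum_congr rfl fun c _ => ?_
          rw [hu]
          refine Finset.sum_congr rfl fun s' _ => Finset.sum_congr rfl fun c' _ => ?_
          rw [hpw, hpw]
      _ = ∑ s', ∑ c, ∑ c', (ψ s c * star (ψ s' c)) * (ψ s' c' * star (ψ s c')) :=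
          Finset.sum_comm
      _ = ∑ s', ρ s s' * ρ s' s := by
          refine Finset.sum_congr rfl fun s' _ => ?_
          rw [hρdef]
          rw [Finset.sum_mul_sum]
  rw [step1]
  have hρsymm : ∀ s s', ρ s' s = star (ρ s s') := by
    intro s s'
    rw [hρdef]
    simp only [star_sum, star_mul', star_star]
    exact Finset.sum_congr rfl fun c _ => (mul_comm _ _)
  have step2 : (∑ s, ∑ s', ρ s s' * ρ s' s)
      = ((∑ s, ∑ s', Complex.normSq (ρ s s') : ℝ) : ℂ) := by
    push_cast
    refine Finset.sum_congr rfl fun s _ => Finset.sum_congr rfl fun s' _ => ?_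
    rw [hρsymm s s']
    rw [← Complex.mul_conj]
    rfl
  rw [step2, Complex.ofReal_re]
  -- now a real Cauchy–Schwarz estimate
  set N : ({ i // i ∈ T } → Fin 2) → ℝ := fun s => ∑ c, Complex.normSq (ψ s c) with hN
  have hNsum : (∑ s, N s) = 1 := by
    simp only [RCLike.star_def, Complex.mul_conj] at hφ
    rw [hu (fun u => (Complex.normSq (φ u) : ℂ))] at hφ
    have : ((∑ s, N s : ℝ) : ℂ) = 1 := by
      rw [hN]; push_cast; exact_mod_cast hφ
    exact_mod_cast this
  have hCS : ∀ s s', Complex.normSq (ρ s s') ≤ N s * N s' := by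
    intro s s'
    have h1 : ‖ρ s s'‖ ≤ ∑ c, ‖ψ s c‖ * ‖ψ s' c‖ := by
      refine (norm_sum_le _ _).trans_eq ?_
      refine Finset.sum_congr rfl fun c _ => ?_
      simp [norm_mul, RCLike.star_def, Complex.norm_conj]
    have h2 : (∑ c, ‖ψ s c‖ * ‖ψ s' c‖) ^ 2
        ≤ (∑ c, ‖ψ s c‖ ^ 2) * (∑ c, ‖ψ s' c‖ ^ 2) :=
      Finset.sum_mul_sq_le_sq_mul_sq _ _ _
    calc Complex.normSq (ρ s s') = ‖ρ s s'‖ ^ 2 := (Complex.sq_norm _).symm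
      _ ≤ (∑ c, ‖ψ s c‖ * ‖ψ s' c‖) ^ 2 :=
          pow_le_pow_left₀ (norm_nonneg _) h1 2
      _ ≤ (∑ c, ‖ψ s c‖ ^ 2) * (∑ c, ‖ψ s' c‖ ^ 2) := h2
      _ = N s * N s' := by
          rw [hN]
          congr 1 <;> exact Finset.sum_congr rfl fun c _ => Complex.sq_norm _
  calc (∑ s, ∑ s', Complex.normSq (ρ s s'))
      ≤ ∑ s, ∑ s', N s * N s' :=
        Finset.sum_le_sum fun s _ => Finset.sum_le_sum fun s' _ => hCS s s'
    _ = (∑ s, N s) * (∑ s', N s') := (Finset.sum_mul_sum _ _ _ _).symm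
    _ = 1 := by rw [hNsum, one_mul]

/-- **Depolarized swap test bound.** For any `n`-qubit pure state `|φ⟩` and
`λ ∈ [0,1]`,
`tr(|φ⟩⟨φ|^{⊗2} · (D_λ^{⊗n} ⊗ D_λ^{⊗n})(SWAP_n)) ≤ (1 − λ + λ²/2)^n`. -/
theorem trace_pure_depol_swap_le (n : ℕ) (lam : ℝ) (h0 : 0 ≤ lam) (h1 : lam ≤ 1)
    (φ : (Fin n → Fin 2) → ℂ) (hφ : ∑ x, φ x * star (φ x) = 1) :
    ((pureTwoCopies φ * depolAll lam (swapN n)).trace).re ≤ (1 - lam + lam ^ 2 / 2) ^ n := by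
  classical
  rw [depolAll_swapN]
  have hbe1 : beF lam 1 = lam / 2 := by simp [beF]
  have hα : 0 ≤ alF lam 2 := by
    simp only [alF]
    positivity
  have hβ : 0 ≤ beF lam 2 := by
    show 0 ≤ (1 - lam) * beF lam 1 + lam / 2 * ((1 - lam) ^ 1 + 2 * beF lam 1)
    rw [hbe1]
    nlinarith
  have hsum2 : alF lam 2 + beF lam 2 = 1 - lam + lam ^ 2 / 2 := by
    show (1 - lam) ^ 2 + ((1 - lam) * beF lam 1 + lam / 2 * ((1 - lam) ^ 1 + 2 * beF lam 1))
      = 1 - lam + lam ^ 2 / 2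
    rw [hbe1]; ring
  set rT : Finset (Fin n) → ℝ :=
    fun T => alF lam 2 ^ T.card * beF lam 2 ^ (Finset.univ \ T).card with hrT
  set IT : Finset (Fin n) → ((Fin n ⊕ Fin n) → Fin 2) → ((Fin n ⊕ Fin n) → Fin 2) → ℂ :=
    fun T x y =>
      ((∏ k ∈ T, if y (Sum.inl k) = x (Sum.inr k) ∧ y (Sum.inr k) = x (Sum.inl k)
          then (1:ℂ) else 0) *
       (∏ k ∈ Finset.univ \ T, if y (Sum.inl k) = x (Sum.inl k) ∧ y (Sum.inr k) = x (Sum.inr k)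
          then (1:ℂ) else 0)) with hIT
  have hFm : ∀ y x : (Fin n ⊕ Fin n) → Fin 2,
      Fmat lam n (fun _ => 2) y x
        = ∑ T ∈ (Finset.univ : Finset (Fin n)).powerset, ((rT T : ℝ) : ℂ) * IT T x y := by
    intro y x
    show (∏ k : Fin n, facF lam 2 (y (Sum.inl k)) (y (Sum.inr k)) (x (Sum.inl k)) (x (Sum.inr k)))
      = _
    rw [show (∏ k : Fin n, facF lam 2 (y (Sum.inl k)) (y (Sum.inr k)) (x (Sum.inl k)) (x (Sum.inr k)))
        = ∏ k : Fin n,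
          (((alF lam 2 : ℝ) : ℂ) * (if y (Sum.inl k) = x (Sum.inr k) ∧ y (Sum.inr k) = x (Sum.inl k) then 1 else 0)
            + ((beF lam 2 : ℝ) : ℂ) * (if y (Sum.inl k) = x (Sum.inl k) ∧ y (Sum.inr k) = x (Sum.inr k) then 1 else 0))
      from rfl]
    rw [Finset.prod_add]
    refine Finset.sum_congr rfl fun T _ => ?_
    rw [Finset.prod_mul_distrib, Finset.prod_mul_distrib, Finset.prod_const, Finset.prod_const,
      hrT, hIT]
    push_cast
    ring
  have htr : (pureTwoCopies φ * Fmat lam n (fun _ => 2)).trace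
      = ∑ T ∈ (Finset.univ : Finset (Fin n)).powerset,
          ((rT T : ℝ) : ℂ) * (∑ x, ∑ y, pureTwoCopies φ x y * IT T x y) := by
    rw [Matrix.trace]
    simp only [Matrix.diag_apply, Matrix.mul_apply, hFm, Finset.mul_sum]
    rw [show (∑ x : (Fin n ⊕ Fin n) → Fin 2, ∑ y : (Fin n ⊕ Fin n) → Fin 2,
          ∑ T ∈ (Finset.univ : Finset (Fin n)).powerset,
            pureTwoCopies φ x y * (((rT T : ℝ) : ℂ) * IT T x y))
        = ∑ T ∈ (Finset.univ : Finset (Fin n)).powerset,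
          ∑ x : (Fin n ⊕ Fin n) → Fin 2, ∑ y : (Fin n ⊕ Fin n) → Fin 2,
            pureTwoCopies φ x y * (((rT T : ℝ) : ℂ) * IT T x y) from
      (Finset.sum_congr rfl fun x _ => Finset.sum_comm).trans Finset.sum_comm]
    refine Finset.sum_congr rfl fun T _ => ?_
    exact Finset.sum_congr rfl fun x _ => Finset.sum_congr rfl fun y _ => by ring
  rw [htr, Complex.re_sum]
  have hstep : ∀ T ∈ (Finset.univ : Finset (Fin n)).powerset,
      (((rT T : ℝ) : ℂ) * (∑ x, ∑ y, pureTwoCopies φ x y * IT T x y)).re ≤ rT T := by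
    intro T _
    rw [Complex.re_ofReal_mul]
    have h2 := tT_bound n φ hφ T
    have hr : 0 ≤ rT T := mul_nonneg (pow_nonneg hα _) (pow_nonneg hβ _)
    calc rT T * (∑ x, ∑ y, pureTwoCopies φ x y * IT T x y).re
        ≤ rT T * 1 := mul_le_mul_of_nonneg_left h2 hr
      _ = rT T := mul_one _
  calc (∑ T ∈ (Finset.univ : Finset (Fin n)).powerset,
        (((rT T : ℝ) : ℂ) * (∑ x, ∑ y, pureTwoCopies φ x y * IT T x y)).re)
      ≤ ∑ T ∈ (Finset.univ : Finset (Fin n)).powerset, rT T := Finset.sum_le_sum hstep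
    _ = ∏ _k : Fin n, (alF lam 2 + beF lam 2) := by
        rw [Finset.prod_add]
        exact Finset.sum_congr rfl fun T _ => by rw [Finset.prod_const, Finset.prod_const, hrT]
    _ = (1 - lam + lam ^ 2 / 2) ^ n := by
        rw [Finset.prod_const, Finset.card_univ, Fintype.card_fin, hsum2]
end

section
/- For any n-qubit pure state |φ⟩ and λ ∈ [0,1], tr(|φ⟩⟨φ|^{⊗2} · (D_λ^{⊗n}⊗D_λ^{⊗n})((2·SWAP₁ − I₄)^{⊗n})) ≤ ((3^n + 1)/2)·(1−λ)^{2n}. -/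
open Matrix

/-- The operator `(2·SWAP₁ − I₄)^{⊗n}` on two copies of the `n`-qubit register,
where the `i`-th factor acts on the pair of qubits `(inl i, inr i)`. -/
noncomputable def twoSwapMinusIdPow (n : ℕ) :
    Matrix ((Fin n ⊕ Fin n) → Fin 2) ((Fin n ⊕ Fin n) → Fin 2) ℂ :=
  Matrix.of fun x y => ∏ i : Fin n,
    ((2 : ℂ) * (if x (Sum.inl i) = y (Sum.inr i) ∧ x (Sum.inr i) = y (Sum.inl i) then 1 else 0)
      - (if x (Sum.inl i) = y (Sum.inl i) ∧ x (Sum.inr i) = y (Sum.inr i) then 1 else 0))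

-- Part A helpers
lemma sum2a (p q : Fin 2) : ∑ b : Fin 2, ((2:ℂ) * (if b = q ∧ p = b then 1 else 0)
    - (if b = b ∧ p = q then 1 else 0)) = 0 := by
  rw [Fin.sum_univ_two]
  fin_cases p <;> fin_cases q <;> norm_num

lemma sum2b (p q : Fin 2) : ∑ b : Fin 2, ((2:ℂ) * (if p = b ∧ b = q then 1 else 0)
    - (if p = q ∧ b = b then 1 else 0)) = 0 := by
  rw [Fin.sum_univ_two]
  fin_cases p <;> fin_cases q <;> norm_num

lemma depolAt_T {n : ℕ} (lam : ℝ) (j : Fin n ⊕ Fin n) :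
    depolAt lam j (twoSwapMinusIdPow n) = ((1 - lam : ℝ) : ℂ) • twoSwapMinusIdPow n := by
  have key : ∀ x y : (Fin n ⊕ Fin n) → Fin 2,
      ∑ b : Fin 2, twoSwapMinusIdPow n (Function.update x j b) (Function.update y j b) = 0 := by
    intro x y
    obtain i₀ | i₀ := j
    · have hb : ∀ b : Fin 2, twoSwapMinusIdPow n (Function.update x (Sum.inl i₀) b)
          (Function.update y (Sum.inl i₀) b)
          = ((2:ℂ) * (if b = y (Sum.inr i₀) ∧ x (Sum.inr i₀) = b then 1 else 0)
            - (if b = b ∧ x (Sum.inr i₀) = y (Sum.inr i₀) then 1 else 0))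
            * ∏ i ∈ Finset.univ.erase i₀,
              ((2 : ℂ) * (if x (Sum.inl i) = y (Sum.inr i) ∧ x (Sum.inr i) = y (Sum.inl i) then 1 else 0)
                - (if x (Sum.inl i) = y (Sum.inl i) ∧ x (Sum.inr i) = y (Sum.inr i) then 1 else 0)) := by
        intro b
        rw [twoSwapMinusIdPow, Matrix.of_apply,
          ← Finset.mul_prod_erase Finset.univ _ (Finset.mem_univ i₀)]
        congr 1
        · simp [Function.update_self, Function.update_of_ne]
        · refine Finset.prod_congr rfl fun i hi => ?_
          have hne : i ≠ i₀ := Finset.ne_of_mem_erase hi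
          have l1 : Sum.inl i ≠ (Sum.inl i₀ : Fin n ⊕ Fin n) := by simp [hne]
          have l2 : Sum.inr i ≠ (Sum.inl i₀ : Fin n ⊕ Fin n) := by simp
          rw [Function.update_of_ne l1, Function.update_of_ne l2,
            Function.update_of_ne l1, Function.update_of_ne l2]
      rw [Finset.sum_congr rfl (fun b _ => hb b), ← Finset.sum_mul, sum2a, zero_mul]
    · have hb : ∀ b : Fin 2, twoSwapMinusIdPow n (Function.update x (Sum.inr i₀) b)
          (Function.update y (Sum.inr i₀) b)
          = ((2:ℂ) * (if x (Sum.inl i₀) = b ∧ b = y (Sum.inl i₀) then 1 else 0)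
            - (if x (Sum.inl i₀) = y (Sum.inl i₀) ∧ b = b then 1 else 0))
            * ∏ i ∈ Finset.univ.erase i₀,
              ((2 : ℂ) * (if x (Sum.inl i) = y (Sum.inr i) ∧ x (Sum.inr i) = y (Sum.inl i) then 1 else 0)
                - (if x (Sum.inl i) = y (Sum.inl i) ∧ x (Sum.inr i) = y (Sum.inr i) then 1 else 0)) := by
        intro b
        rw [twoSwapMinusIdPow, Matrix.of_apply,
          ← Finset.mul_prod_erase Finset.univ _ (Finset.mem_univ i₀)]
        congr 1
        · simp [Function.update_self, Function.update_of_ne]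
        · refine Finset.prod_congr rfl fun i hi => ?_
          have hne : i ≠ i₀ := Finset.ne_of_mem_erase hi
          have l1 : Sum.inl i ≠ (Sum.inr i₀ : Fin n ⊕ Fin n) := by simp
          have l2 : Sum.inr i ≠ (Sum.inr i₀ : Fin n ⊕ Fin n) := by simp [hne]
          rw [Function.update_of_ne l1, Function.update_of_ne l2,
            Function.update_of_ne l1, Function.update_of_ne l2]
      rw [Finset.sum_congr rfl (fun b _ => hb b), ← Finset.sum_mul, sum2b, zero_mul]
  have hz : (Matrix.of (fun x y => if x j = y j then
      ∑ b : Fin 2, twoSwapMinusIdPow n (Function.update x j b) (Function.update y j b) else 0)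
      : Matrix ((Fin n ⊕ Fin n) → Fin 2) ((Fin n ⊕ Fin n) → Fin 2) ℂ) = 0 := by
    ext x y
    simp only [Matrix.of_apply, Matrix.zero_apply, key x y, ite_self]
  rw [depolAt, hz, smul_zero, add_zero]

lemma depolAt_smul {ι : Type} [DecidableEq ι] [Fintype ι] (lam : ℝ) (i : ι) (c : ℂ)
    (M : Matrix (ι → Fin 2) (ι → Fin 2) ℂ) :
    depolAt lam i (c • M) = c • depolAt lam i M := by
  ext x y
  by_cases h : x i = y i <;>
    simp [depolAt, h, Finset.mul_sum, Matrix.add_apply, Matrix.smul_apply, smul_eq_mul] <;> ring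

lemma foldl_depol_s4 {n : ℕ} (lam : ℝ) (L : List (Fin n ⊕ Fin n)) (c : ℂ) :
    L.foldl (fun N i => depolAt lam i N) (c • twoSwapMinusIdPow n)
      = (((1 - lam : ℝ) : ℂ) ^ L.length * c) • twoSwapMinusIdPow n := by
  induction L generalizing c with
  | nil => simp
  | cons i L ih =>
    rw [List.foldl_cons, depolAt_smul, depolAt_T, smul_smul, ih]
    congr 1
    rw [List.length_cons]
    ring

lemma depolAll_T {n : ℕ} (lam : ℝ) :
    depolAll lam (twoSwapMinusIdPow n)
      = ((((1 - lam) ^ (2 * n) : ℝ)) : ℂ) • twoSwapMinusIdPow n := by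
  have h := foldl_depol_s4 lam (Finset.univ : Finset (Fin n ⊕ Fin n)).toList 1
  rw [one_smul] at h
  rw [depolAll, h, Finset.length_toList, Finset.card_univ]
  rw [Fintype.card_sum, Fintype.card_fin, mul_one]
  norm_cast
  rw [two_mul]

-- Part B: merge machinery
def mg {n : ℕ} (S : Finset (Fin n)) (u v : Fin n → Fin 2) : Fin n → Fin 2 :=
  fun i => if i ∈ S then u i else v i

lemma mg_left {n : ℕ} (S : Finset (Fin n)) (u v x : Fin n → Fin 2) :
    mg S (mg S u v) x = mg S u x := by
  funext i; by_cases h : i ∈ S <;> simp [mg, h]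

lemma mg_right {n : ℕ} (S : Finset (Fin n)) (u v x : Fin n → Fin 2) :
    mg S x (mg S v u) = mg S x u := by
  funext i; by_cases h : i ∈ S <;> simp [mg, h]

lemma mg_self {n : ℕ} (S : Finset (Fin n)) (u : Fin n → Fin 2) : mg S u u = u := by
  funext i; by_cases h : i ∈ S <;> simp [mg, h]

lemma mg_invol {n : ℕ} (S : Finset (Fin n)) :
    Function.Involutive
      (fun p : (Fin n → Fin 2) × (Fin n → Fin 2) => (mg S p.1 p.2, mg S p.2 p.1)) := by
  rintro ⟨u, v⟩
  simp [mg_left, mg_right, mg_self]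

lemma sum_mg {n : ℕ} {M : Type*} [AddCommMonoid M] (S : Finset (Fin n))
    (F : (Fin n → Fin 2) → (Fin n → Fin 2) → M) :
    (∑ u, ∑ v, F (mg S u v) (mg S v u)) = ∑ u, ∑ v, F u v := by
  have h1 : ∀ (G : (Fin n → Fin 2) → (Fin n → Fin 2) → M),
      (∑ u, ∑ v, G u v) = ∑ p : (Fin n → Fin 2) × (Fin n → Fin 2), G p.1 p.2 :=
    fun G => (Fintype.sum_prod_type (f := fun p => G p.1 p.2)).symm
  rw [h1, h1]
  exact Fintype.sum_bijective _ (mg_invol S).bijective _ _ (fun p => rfl)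

lemma sum_mg' {n : ℕ} {M : Type*} [AddCommMonoid M] (S : Finset (Fin n))
    (F G : (Fin n → Fin 2) → (Fin n → Fin 2) → M)
    (h : ∀ u v, F (mg S u v) (mg S v u) = G u v) :
    (∑ u, ∑ v, F u v) = ∑ u, ∑ v, G u v := by
  rw [← sum_mg S F]
  exact Finset.sum_congr rfl fun u _ => Finset.sum_congr rfl fun v _ => h u v

lemma card_V {n : ℕ} : Fintype.card (Fin n → Fin 2) = 2 ^ n := by simp

noncomputable def gfun {n : ℕ} (φ : (Fin n → Fin 2) → ℂ) (S : Finset (Fin n))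
    (u w : Fin n → Fin 2) : ℂ :=
  ∑ v, φ (mg S u v) * star (φ (mg S w v))

noncomputable def termB {n : ℕ} (φ : (Fin n → Fin 2) → ℂ) (S : Finset (Fin n)) : ℂ :=
  ∑ u, ∑ w, φ u * φ w * star (φ (mg S w u)) * star (φ (mg S u w))

set_option maxHeartbeats 1000000 in
lemma key1 {n : ℕ} (φ : (Fin n → Fin 2) → ℂ) (S : Finset (Fin n)) :
    ∑ u, ∑ w, gfun φ S u w * star (gfun φ S u w)
      = ((2:ℂ) ^ n * 2 ^ n) * termB φ S := by
  have hg : ∀ u w, gfun φ S u w * star (gfun φ S u w)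
      = ∑ v, ∑ z, φ (mg S u v) * star (φ (mg S w v)) * star (φ (mg S u z)) * φ (mg S w z) := by
    intro u w
    rw [gfun, star_sum, Finset.sum_mul_sum]
    refine Finset.sum_congr rfl fun v _ => Finset.sum_congr rfl fun z _ => ?_
    rw [star_mul', star_star]
    ring
  calc ∑ u, ∑ w, gfun φ S u w * star (gfun φ S u w)
      = ∑ u, ∑ v, ∑ w, ∑ z,
          φ (mg S u v) * star (φ (mg S w v)) * star (φ (mg S u z)) * φ (mg S w z) := by
        simp only [hg]
        exact Finset.sum_congr rfl fun u _ => Finset.sum_comm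
    _ = ∑ u, ∑ v, ∑ w, ∑ z,
          φ u * star (φ (mg S w u)) * star (φ (mg S u z)) * φ (mg S w z) := by
        refine sum_mg' S _ _ fun u v => ?_
        refine Finset.sum_congr rfl fun w _ => Finset.sum_congr rfl fun z _ => ?_
        rw [mg_right, mg_left, mg_left, mg_right, mg_self]
    _ = ∑ u, ∑ v, ∑ w, ∑ z,
          φ u * star (φ (mg S w u)) * star (φ (mg S u w)) * φ w := by
        refine Finset.sum_congr rfl fun u _ => Finset.sum_congr rfl fun v _ => ?_
        refine sum_mg' S _ _ fun w z => ?_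
        rw [mg_left, mg_right, mg_left, mg_right, mg_self]
    _ = ((2:ℂ) ^ n * 2 ^ n) * termB φ S := by
        simp only [Finset.sum_const, Finset.card_univ, card_V, nsmul_eq_mul, Nat.cast_pow,
          Nat.cast_ofNat, termB, Finset.mul_sum]
        refine Finset.sum_congr rfl fun u _ => Finset.sum_congr rfl fun w _ => ?_
        ring

lemma normSq_one {n : ℕ} (φ : (Fin n → Fin 2) → ℂ) (hφ : ∑ x, φ x * star (φ x) = 1) :
    ∑ x, Complex.normSq (φ x) = 1 := by
  have : ((∑ x, Complex.normSq (φ x) : ℝ) : ℂ) = 1 := by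
    push_cast
    rw [← hφ]
    exact Finset.sum_congr rfl fun x _ => (Complex.mul_conj (φ x)).symm
  exact_mod_cast this

lemma termB_bounds {n : ℕ} (φ : (Fin n → Fin 2) → ℂ) (hφ : ∑ x, φ x * star (φ x) = 1)
    (S : Finset (Fin n)) :
    ∃ t : ℝ, 0 ≤ t ∧ t ≤ 1 ∧ termB φ S = (t : ℂ) := by
  set A : ℝ := ∑ u, ∑ w, Complex.normSq (gfun φ S u w) with hA
  have hA0 : 0 ≤ A := Finset.sum_nonneg fun u _ =>
    Finset.sum_nonneg fun w _ => Complex.normSq_nonneg _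
  -- A = (2^n*2^n) * termB
  have hcast : ((A : ℂ)) = ((2:ℂ) ^ n * 2 ^ n) * termB φ S := by
    rw [hA, ← key1 φ S]
    push_cast
    refine Finset.sum_congr rfl fun u _ => Finset.sum_congr rfl fun w _ => ?_
    exact (Complex.mul_conj (gfun φ S u w)).symm
  -- sum of hh = 2^n
  set hh : (Fin n → Fin 2) → ℝ := fun u => ∑ v, Complex.normSq (φ (mg S u v)) with hhh
  have hh_nonneg : ∀ u, 0 ≤ hh u := fun u =>
    Finset.sum_nonneg fun v _ => Complex.normSq_nonneg _
  have hh_sum : ∑ u, hh u = 2 ^ n := by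
    have h1 : (∑ u, ∑ v, Complex.normSq (φ (mg S u v)))
        = ∑ u : Fin n → Fin 2, ∑ v : Fin n → Fin 2, Complex.normSq (φ u) :=
      sum_mg' S _ _ fun u v => by rw [mg_left, mg_right, mg_self]
    rw [hhh]
    simp only [h1, Finset.sum_const, Finset.card_univ, card_V, nsmul_eq_mul]
    rw [← Finset.mul_sum, normSq_one φ hφ, mul_one]
    push_cast
    ring
  -- Cauchy-Schwarz per entry
  have hCS : ∀ u w, Complex.normSq (gfun φ S u w) ≤ hh u * hh w := by
    intro u w
    have h2 : ‖gfun φ S u w‖ ≤ ∑ v, ‖φ (mg S u v)‖ * ‖φ (mg S w v)‖ := by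
      refine (norm_sum_le _ _).trans_eq ?_
      refine Finset.sum_congr rfl fun v _ => ?_
      rw [norm_mul]
      congr 1
      exact (norm_star _)
    have h3 : Complex.normSq (gfun φ S u w)
        ≤ (∑ v, ‖φ (mg S u v)‖ * ‖φ (mg S w v)‖) ^ 2 := by
      rw [Complex.normSq_eq_norm_sq]
      exact pow_le_pow_left₀ (norm_nonneg _) h2 2
    refine h3.trans ?_
    have h4 := Finset.sum_mul_sq_le_sq_mul_sq Finset.univ
      (fun v => ‖φ (mg S u v)‖) (fun v => ‖φ (mg S w v)‖)
    calc (∑ v, ‖φ (mg S u v)‖ * ‖φ (mg S w v)‖) ^ 2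
        ≤ (∑ v, ‖φ (mg S u v)‖ ^ 2) * (∑ v, ‖φ (mg S w v)‖ ^ 2) := h4
      _ = hh u * hh w := by
          rw [hhh]
          congr 1 <;> exact Finset.sum_congr rfl fun v _ => (Complex.sq_norm _)
  have hA_le : A ≤ 2 ^ n * 2 ^ n := by
    calc A ≤ ∑ u, ∑ w, hh u * hh w := by
          exact Finset.sum_le_sum fun u _ => Finset.sum_le_sum fun w _ => hCS u w
      _ = (∑ u, hh u) * (∑ w, hh w) :=
          (Finset.sum_mul_sum Finset.univ Finset.univ hh hh).symm
      _ = 2 ^ n * 2 ^ n := by rw [hh_sum]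
  refine ⟨A / (2 ^ n * 2 ^ n), by positivity, ?_, ?_⟩
  · rw [div_le_one (by positivity)]
    exact hA_le
  · have hne : ((2:ℂ) ^ n * 2 ^ n) ≠ 0 :=
      mul_ne_zero (pow_ne_zero _ two_ne_zero) (pow_ne_zero _ two_ne_zero)
    rw [Complex.ofReal_div, hcast, Complex.ofReal_mul, Complex.ofReal_pow, Complex.ofReal_ofNat,
      mul_div_cancel_left₀ _ hne]

lemma iteOne_mul_iteOne (P Q : Prop) [Decidable P] [Decidable Q] :
    ((if P then (1:ℂ) else 0) * if Q then 1 else 0) = if P ∧ Q then 1 else 0 := by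
  by_cases hP : P <;> by_cases hQ : Q <;> simp [hP, hQ]

lemma expandT {n : ℕ} (y x : (Fin n ⊕ Fin n) → Fin 2) :
    twoSwapMinusIdPow n y x
      = ∑ S ∈ (Finset.univ : Finset (Fin n)).powerset,
          (2:ℂ) ^ S.card * (-1) ^ (n - S.card) *
            (if (∀ i ∈ S, y (Sum.inl i) = x (Sum.inr i) ∧ y (Sum.inr i) = x (Sum.inl i)) ∧
                (∀ i ∈ Finset.univ \ S,
                  y (Sum.inl i) = x (Sum.inl i) ∧ y (Sum.inr i) = x (Sum.inr i))
             then 1 else 0) := by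
  rw [twoSwapMinusIdPow, Matrix.of_apply]
  simp only [sub_eq_add_neg]
  rw [Finset.prod_add]
  refine Finset.sum_congr rfl fun S hS => ?_
  have hcard : (Finset.univ \ S).card = n - S.card := by
    rw [Finset.card_sdiff_of_subset (Finset.mem_powerset.mp hS), Finset.card_univ, Fintype.card_fin]
  have hneg : (∏ i ∈ Finset.univ \ S,
      -(if y (Sum.inl i) = x (Sum.inl i) ∧ y (Sum.inr i) = x (Sum.inr i) then (1:ℂ) else 0))
      = (-1:ℂ) ^ (n - S.card) *
        (if ∀ i ∈ Finset.univ \ S,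
            y (Sum.inl i) = x (Sum.inl i) ∧ y (Sum.inr i) = x (Sum.inr i) then 1 else 0) := by
    have hrw : ∀ i ∈ Finset.univ \ S,
        -(if y (Sum.inl i) = x (Sum.inl i) ∧ y (Sum.inr i) = x (Sum.inr i) then (1:ℂ) else 0)
          = (-1:ℂ) * (if y (Sum.inl i) = x (Sum.inl i) ∧ y (Sum.inr i) = x (Sum.inr i)
            then (1:ℂ) else 0) := fun i _ => (neg_one_mul _).symm
    rw [Finset.prod_congr rfl hrw, Finset.prod_mul_distrib, Finset.prod_const, hcard,
      Finset.prod_boole]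
    congr
  have hpos : (∏ i ∈ S,
      (2:ℂ) * (if y (Sum.inl i) = x (Sum.inr i) ∧ y (Sum.inr i) = x (Sum.inl i) then 1 else 0))
      = (2:ℂ) ^ S.card *
        (if ∀ i ∈ S, y (Sum.inl i) = x (Sum.inr i) ∧ y (Sum.inr i) = x (Sum.inl i)
         then 1 else 0) := by
    rw [Finset.prod_mul_distrib, Finset.prod_const, Finset.prod_boole]
    congr
  rw [hpos, hneg, mul_mul_mul_comm, iteOne_mul_iteOne]

def sg {n : ℕ} (S : Finset (Fin n)) (x : (Fin n ⊕ Fin n) → Fin 2) :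
    (Fin n ⊕ Fin n) → Fin 2
  | Sum.inl i => if i ∈ S then x (Sum.inr i) else x (Sum.inl i)
  | Sum.inr i => if i ∈ S then x (Sum.inl i) else x (Sum.inr i)

lemma cond_iff {n : ℕ} (S : Finset (Fin n)) (x y : (Fin n ⊕ Fin n) → Fin 2) :
    ((∀ i ∈ S, y (Sum.inl i) = x (Sum.inr i) ∧ y (Sum.inr i) = x (Sum.inl i)) ∧
      (∀ i ∈ Finset.univ \ S, y (Sum.inl i) = x (Sum.inl i) ∧ y (Sum.inr i) = x (Sum.inr i)))
      ↔ y = sg S x := by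
  constructor
  · rintro ⟨h1, h2⟩
    funext j
    obtain i | i := j <;> by_cases hi : i ∈ S
    · rw [sg, if_pos hi]; exact (h1 i hi).1
    · rw [sg, if_neg hi]; exact (h2 i (by simp [hi])).1
    · rw [sg, if_pos hi]; exact (h1 i hi).2
    · rw [sg, if_neg hi]; exact (h2 i (by simp [hi])).2
  · rintro rfl
    constructor
    · intro i hi
      constructor <;> simp [sg, hi]
    · intro i hi
      rw [Finset.mem_sdiff] at hi
      constructor <;> simp [sg, hi.2]

lemma sumP_eq {n : ℕ} (φ : (Fin n → Fin 2) → ℂ) (S : Finset (Fin n)) :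
    ∑ x, pureTwoCopies φ x (sg S x) = termB φ S := by
  have h := Equiv.sum_comp (Equiv.sumArrowEquivProdArrow (Fin n) (Fin n) (Fin 2)).symm
    (fun x => pureTwoCopies φ x (sg S x))
  rw [← h, Fintype.sum_prod_type, termB]
  refine Finset.sum_congr rfl fun u _ => Finset.sum_congr rfl fun w _ => ?_
  have e1 : (Equiv.sumArrowEquivProdArrow (Fin n) (Fin n) (Fin 2)).symm (u, w)
      = Sum.elim u w := rfl
  rw [e1]
  have h3 : sg S (Sum.elim u w) ∘ Sum.inl = mg S w u := by
    funext i; by_cases hi : i ∈ S <;> simp [sg, mg, hi]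
  have h4 : sg S (Sum.elim u w) ∘ Sum.inr = mg S u w := by
    funext i; by_cases hi : i ∈ S <;> simp [sg, mg, hi]
  rw [pureTwoCopies, Matrix.of_apply, h3, h4]
  have h1 : Sum.elim u w ∘ Sum.inl = u := rfl
  have h2 : Sum.elim u w ∘ Sum.inr = w := rfl
  rw [h1, h2]
  ring

lemma trace_eq {n : ℕ} (φ : (Fin n → Fin 2) → ℂ) :
    (pureTwoCopies φ * twoSwapMinusIdPow n).trace
      = ∑ S ∈ (Finset.univ : Finset (Fin n)).powerset,
          (2:ℂ) ^ S.card * (-1) ^ (n - S.card) * termB φ S := by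
  have h1 : (pureTwoCopies φ * twoSwapMinusIdPow n).trace
      = ∑ x, ∑ y, pureTwoCopies φ x y * twoSwapMinusIdPow n y x := by
    rw [Matrix.trace]
    exact Finset.sum_congr rfl fun x _ => by rw [Matrix.diag_apply, Matrix.mul_apply]
  rw [h1]
  have h2 : ∀ x : (Fin n ⊕ Fin n) → Fin 2,
      (∑ y, pureTwoCopies φ x y * twoSwapMinusIdPow n y x)
      = ∑ S ∈ (Finset.univ : Finset (Fin n)).powerset,
          (2:ℂ) ^ S.card * (-1) ^ (n - S.card) * pureTwoCopies φ x (sg S x) := by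
    intro x
    calc (∑ y, pureTwoCopies φ x y * twoSwapMinusIdPow n y x)
        = ∑ y, ∑ S ∈ (Finset.univ : Finset (Fin n)).powerset,
            (if y = sg S x then
              (2:ℂ) ^ S.card * (-1) ^ (n - S.card) * pureTwoCopies φ x y else 0) := by
          refine Finset.sum_congr rfl fun y _ => ?_
          rw [expandT, Finset.mul_sum]
          refine Finset.sum_congr rfl fun S hS => ?_
          by_cases h : y = sg S x
          · rw [if_pos ((cond_iff S x y).mpr h), if_pos h]; ring
          · rw [if_neg (fun hc => h ((cond_iff S x y).mp hc)), if_neg h, mul_zero, mul_zero]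
      _ = ∑ S ∈ (Finset.univ : Finset (Fin n)).powerset, ∑ y,
            (if y = sg S x then
              (2:ℂ) ^ S.card * (-1) ^ (n - S.card) * pureTwoCopies φ x y else 0) :=
          Finset.sum_comm
      _ = ∑ S ∈ (Finset.univ : Finset (Fin n)).powerset,
          (2:ℂ) ^ S.card * (-1) ^ (n - S.card) * pureTwoCopies φ x (sg S x) := by
          refine Finset.sum_congr rfl fun S _ => ?_
          rw [Finset.sum_ite_eq' Finset.univ (sg S x)
            (fun y => (2:ℂ) ^ S.card * (-1) ^ (n - S.card) * pureTwoCopies φ x y),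
            if_pos (Finset.mem_univ _)]
  rw [Finset.sum_congr rfl fun x _ => h2 x, Finset.sum_comm]
  refine Finset.sum_congr rfl fun S _ => ?_
  rw [← Finset.mul_sum, sumP_eq]

lemma binom_even {n : ℕ} :
    ∑ S ∈ (Finset.univ : Finset (Fin n)).powerset,
        (if Even (n - S.card) then (2:ℝ) ^ S.card else 0) = (3 ^ n + 1) / 2 := by
  have key : ∀ S ∈ (Finset.univ : Finset (Fin n)).powerset,
      (if Even (n - S.card) then (2:ℝ) ^ S.card else 0)
        = ((∏ _i ∈ S, (2:ℝ)) * ∏ _i ∈ Finset.univ \ S, (1:ℝ)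
          + (∏ _i ∈ S, (2:ℝ)) * ∏ _i ∈ Finset.univ \ S, (-1:ℝ)) / 2 := by
    intro S hS
    have hcard : (Finset.univ \ S).card = n - S.card := by
      rw [Finset.card_sdiff_of_subset (Finset.mem_powerset.mp hS), Finset.card_univ, Fintype.card_fin]
    rw [Finset.prod_const, Finset.prod_const, Finset.prod_const, hcard]
    by_cases he : Even (n - S.card)
    · rw [if_pos he, he.neg_one_pow, one_pow]; ring
    · rw [if_neg he, (Nat.not_even_iff_odd.mp he).neg_one_pow, one_pow]; ring
  rw [Finset.sum_congr rfl key, ← Finset.sum_div, Finset.sum_add_distrib,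
    ← Finset.prod_add (fun _ : Fin n => (2:ℝ)) (fun _ => (1:ℝ)) Finset.univ,
    ← Finset.prod_add (fun _ : Fin n => (2:ℝ)) (fun _ => (-1:ℝ)) Finset.univ,
    Finset.prod_const, Finset.prod_const, Finset.card_univ, Fintype.card_fin]
  norm_num

lemma partB {n : ℕ} (φ : (Fin n → Fin 2) → ℂ) (hφ : ∑ x, φ x * star (φ x) = 1) :
    ((pureTwoCopies φ * twoSwapMinusIdPow n).trace).re ≤ (3 ^ n + 1) / 2 := by
  choose t h0 h1 heq using fun S => termB_bounds φ hφ S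
  rw [trace_eq, Complex.re_sum]
  have hre : ∀ S ∈ (Finset.univ : Finset (Fin n)).powerset,
      ((2:ℂ) ^ S.card * (-1) ^ (n - S.card) * termB φ S).re
        = 2 ^ S.card * (-1 : ℝ) ^ (n - S.card) * t S := by
    intro S _
    rw [heq S]
    have : (2:ℂ) ^ S.card * (-1) ^ (n - S.card) * ((t S : ℝ) : ℂ)
        = (((2:ℝ) ^ S.card * (-1 : ℝ) ^ (n - S.card) * t S : ℝ) : ℂ) := by
      push_cast; ring
    rw [this, Complex.ofReal_re]
  rw [Finset.sum_congr rfl hre]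
  have hb : ∀ S ∈ (Finset.univ : Finset (Fin n)).powerset,
      (2:ℝ) ^ S.card * (-1 : ℝ) ^ (n - S.card) * t S
        ≤ (if Even (n - S.card) then (2:ℝ) ^ S.card else 0) := by
    intro S _
    have hp : (0:ℝ) < 2 ^ S.card := by positivity
    by_cases he : Even (n - S.card)
    · rw [if_pos he, he.neg_one_pow, mul_one]
      nlinarith [h1 S, h0 S]
    · rw [if_neg he, (Nat.not_even_iff_odd.mp he).neg_one_pow]
      nlinarith [h0 S]
  exact (Finset.sum_le_sum hb).trans (le_of_eq binom_even)


/-- **Depolarized `(2·SWAP₁ − I₄)^{⊗n}` bound.** For any `n`-qubit pure state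
`|φ⟩` and `λ ∈ [0,1]`,
`tr(|φ⟩⟨φ|^{⊗2} · (D_λ^{⊗n}⊗D_λ^{⊗n})((2·SWAP₁ − I₄)^{⊗n})) ≤ ((3^n+1)/2)·(1−λ)^{2n}`. -/
theorem trace_pure_depol_twoSwapMinusId_le (n : ℕ) (lam : ℝ) (h0 : 0 ≤ lam) (h1 : lam ≤ 1)
    (φ : (Fin n → Fin 2) → ℂ) (hφ : ∑ x, φ x * star (φ x) = 1) :
    ((pureTwoCopies φ * depolAll lam (twoSwapMinusIdPow n)).trace).re
      ≤ ((3 ^ n + 1) / 2) * (1 - lam) ^ (2 * n) := by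
  rw [depolAll_T, Matrix.mul_smul, Matrix.trace_smul, smul_eq_mul, Complex.re_ofReal_mul]
  have hr : (0:ℝ) ≤ (1 - lam) ^ (2 * n) := pow_nonneg (by linarith) _
  calc (1 - lam) ^ (2 * n) * ((pureTwoCopies φ * twoSwapMinusIdPow n).trace).re
      ≤ (1 - lam) ^ (2 * n) * ((3 ^ n + 1) / 2) :=
        mul_le_mul_of_nonneg_left (partB φ hφ) hr
    _ = ((3 ^ n + 1) / 2) * (1 - lam) ^ (2 * n) := mul_comm _ _
end

section
/- For positive semidefinite operators ρ_x on x copies and ρ_y on y copies of a fixed finite-dimensional Hilbert space, tr((ρ_x ⊗ ρ_y) · S_{x+y}) ≥ tr(ρ_x S_x) · tr(ρ_y S_y), where S_k denotes the sum of all permutation operators on k copies. -/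
set_option linter.unusedSectionVars false
set_option maxHeartbeats 1000000

open Matrix
open scoped ComplexOrder

/-- The sum `S_k = Σ_{π ∈ Sym(κ)} W_π` of all permutation operators on copies of
`C^d` indexed by `κ`. -/
noncomputable def permSum (κ : Type) [DecidableEq κ] [Fintype κ] (d : ℕ) :
    Matrix (κ → Fin d) (κ → Fin d) ℂ :=
  ∑ π : Equiv.Perm κ, Matrix.of fun z w => if z = w ∘ π then 1 else 0

/-- The tensor product `ρx ⊗ ρy` of operators on `x` copies and `y` copies,
viewed as an operator on the `x + y` copies indexed by `Fin x ⊕ Fin y`. -/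
noncomputable def tensorCopies {d x y : ℕ}
    (ρx : Matrix (Fin x → Fin d) (Fin x → Fin d) ℂ)
    (ρy : Matrix (Fin y → Fin d) (Fin y → Fin d) ℂ) :
    Matrix ((Fin x ⊕ Fin y) → Fin d) ((Fin x ⊕ Fin y) → Fin d) ℂ :=
  Matrix.of fun z w => ρx (z ∘ Sum.inl) (w ∘ Sum.inl) * ρy (z ∘ Sum.inr) (w ∘ Sum.inr)

namespace SuperAdd

variable {κ : Type} [DecidableEq κ] [Fintype κ] {d : ℕ}

noncomputable def permMat (κ : Type) [DecidableEq κ] [Fintype κ] (d : ℕ) (π : Equiv.Perm κ) :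
    Matrix (κ → Fin d) (κ → Fin d) ℂ :=
  Matrix.of fun z w => if z = w ∘ π then 1 else 0

lemma permSum_eq (κ : Type) [DecidableEq κ] [Fintype κ] (d : ℕ) :
    permSum κ d = ∑ π : Equiv.Perm κ, permMat κ d π := rfl

lemma permMat_mul (σ τ : Equiv.Perm κ) :
    permMat κ d σ * permMat κ d τ = permMat κ d (τ * σ) := by
  ext z w
  rw [Matrix.mul_apply, Finset.sum_eq_single (w ∘ τ)]
  · show (if z = (w ∘ ⇑τ) ∘ ⇑σ then (1:ℂ) else 0) * (if (w ∘ ⇑τ) = w ∘ ⇑τ then 1 else 0) = _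
    rw [if_pos rfl, mul_one]
    rfl
  · intro b _ hb
    show (if z = b ∘ ⇑σ then (1:ℂ) else 0) * (if b = w ∘ ⇑τ then 1 else 0) = 0
    rw [if_neg hb, mul_zero]
  · intro h
    exact absurd (Finset.mem_univ _) h

lemma permMat_mul_permSum (σ : Equiv.Perm κ) :
    permMat κ d σ * permSum κ d = permSum κ d := by
  rw [permSum_eq, Finset.mul_sum]
  simp_rw [permMat_mul]
  exact Fintype.sum_equiv (Equiv.mulRight σ) _ _ (fun τ => rfl)

lemma permSum_mul_permMat (σ : Equiv.Perm κ) :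
    permSum κ d * permMat κ d σ = permSum κ d := by
  rw [permSum_eq, Finset.sum_mul]
  simp_rw [permMat_mul]
  exact Fintype.sum_equiv (Equiv.mulLeft σ) _ _ (fun τ => rfl)

end SuperAdd

namespace SuperAdd

variable {κ : Type} [DecidableEq κ] [Fintype κ] {d : ℕ}

lemma permSum_mul_permSum :
    permSum κ d * permSum κ d = (Fintype.card (Equiv.Perm κ) : ℂ) • permSum κ d := by
  nth_rewrite 2 [permSum_eq]
  rw [Finset.mul_sum]
  simp_rw [permSum_mul_permMat]
  rw [Finset.sum_const, Finset.card_univ, Nat.cast_smul_eq_nsmul]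

lemma permMat_conjTranspose (σ : Equiv.Perm κ) :
    (permMat κ d σ)ᴴ = permMat κ d σ⁻¹ := by
  ext z w
  show (starRingEnd ℂ) (if w = z ∘ ⇑σ then 1 else 0) = (if z = w ∘ ⇑σ⁻¹ then 1 else 0)
  rw [apply_ite (starRingEnd ℂ), _root_.map_one, _root_.map_zero]
  congr 1
  rw [eq_iff_iff]
  constructor
  · intro h; subst h; funext i; simp
  · intro h; subst h; funext i; simp

lemma permSum_conjTranspose : (permSum κ d)ᴴ = permSum κ d := by
  rw [permSum_eq, Matrix.conjTranspose_sum]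
  simp_rw [permMat_conjTranspose]
  exact Fintype.sum_equiv (Equiv.inv _) _ _ (fun τ => rfl)

lemma permSum_comp_right (σ : Equiv.Perm κ) (c a : κ → Fin d) :
    permSum κ d c (a ∘ ⇑σ) = permSum κ d c a := by
  rw [permSum_eq]
  rw [Matrix.sum_apply, Matrix.sum_apply]
  exact Fintype.sum_equiv (Equiv.mulLeft σ) _ _ (fun τ => rfl)

lemma trace_mul_permMat (ρ : Matrix (κ → Fin d) (κ → Fin d) ℂ) (π : Equiv.Perm κ) :
    (ρ * permMat κ d π).trace = ∑ z : κ → Fin d, ρ z (z ∘ ⇑π) := by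
  rw [Matrix.trace]
  refine Finset.sum_congr rfl (fun z _ => ?_)
  rw [Matrix.diag_apply, Matrix.mul_apply, Finset.sum_eq_single (z ∘ ⇑π)]
  · show ρ z (z ∘ ⇑π) * (if z ∘ ⇑π = z ∘ ⇑π then 1 else 0) = _
    rw [if_pos rfl, mul_one]
  · intro b _ hb
    show ρ z b * (if b = z ∘ ⇑π then 1 else 0) = 0
    rw [if_neg hb, mul_zero]
  · intro h; exact absurd (Finset.mem_univ _) h

lemma trace_mul_permSum (ρ : Matrix (κ → Fin d) (κ → Fin d) ℂ) :
    (ρ * permSum κ d).trace = ∑ π : Equiv.Perm κ, ∑ z : κ → Fin d, ρ z (z ∘ ⇑π) := by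
  rw [permSum_eq, Finset.mul_sum, Matrix.trace_sum]
  exact Finset.sum_congr rfl (fun π _ => trace_mul_permMat ρ π)

end SuperAdd



namespace SuperAdd

section Core

variable {X Y : Type} [Fintype X] [DecidableEq X] [Fintype Y] [DecidableEq Y]
variable {V : Type} [Fintype V] [DecidableEq V]

variable (π : Equiv.Perm (X ⊕ Y))

/-- position `inl i` is read by a column-slot of the first factor -/
def pP (i : X) : Prop := (π.symm (Sum.inl i)).isLeft

/-- position `inr j` is read by a column-slot of the first factor -/
def pQ (j : Y) : Prop := (π.symm (Sum.inr j)).isLeft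

instance : DecidablePred (pP π) :=
  fun i => inferInstanceAs (Decidable ((π.symm (Sum.inl i)).isLeft = true))

instance : DecidablePred (pQ π) :=
  fun j => inferInstanceAs (Decidable ((π.symm (Sum.inr j)).isLeft = true))

attribute [reducible] pP pQ

lemma getLeft_of_eq {u : X ⊕ Y} {a : X} (h : u = Sum.inl a) (hl : u.isLeft) :
    u.getLeft hl = a := by subst h; rfl

lemma getRight_of_eq {u : X ⊕ Y} {b : Y} (h : u = Sum.inr b) (hr : u.isRight) :
    u.getRight hr = b := by subst h; rfl

def rowA (p : {i : X // pP π i} → V) (s : {i : X // ¬ pP π i} → V) : X → V :=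
  fun i => if h : pP π i then p ⟨i, h⟩ else s ⟨i, h⟩

def rowB (q : {j : Y // pQ π j} → V) (t : {j : Y // ¬ pQ π j} → V) : Y → V :=
  fun j => if h : pQ π j then q ⟨j, h⟩ else t ⟨j, h⟩

def colA (p : {i : X // pP π i} → V) (q : {j : Y // pQ π j} → V) : X → V :=
  fun i =>
    if h : (π (Sum.inl i)).isLeft then
      p ⟨(π (Sum.inl i)).getLeft h, by
        show (π.symm (Sum.inl _)).isLeft
        rw [Sum.inl_getLeft, Equiv.symm_apply_apply]; rfl⟩
    else
      q ⟨(π (Sum.inl i)).getRight (Sum.not_isLeft.mp h), by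
        show (π.symm (Sum.inr _)).isLeft
        rw [Sum.inr_getRight, Equiv.symm_apply_apply]; rfl⟩

def colB (s : {i : X // ¬ pP π i} → V) (t : {j : Y // ¬ pQ π j} → V) : Y → V :=
  fun j =>
    if h : (π (Sum.inr j)).isLeft then
      s ⟨(π (Sum.inr j)).getLeft h, by
        show ¬ (π.symm (Sum.inl _)).isLeft
        rw [Sum.inl_getLeft, Equiv.symm_apply_apply]; simp⟩
    else
      t ⟨(π (Sum.inr j)).getRight (Sum.not_isLeft.mp h), by
        show ¬ (π.symm (Sum.inr _)).isLeft
        rw [Sum.inr_getRight, Equiv.symm_apply_apply]; simp⟩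

lemma colA_eq_left {i i' : X} (h : π (Sum.inl i) = Sum.inl i')
    (p : {i : X // pP π i} → V) (q : {j : Y // pQ π j} → V) (h' : pP π i') :
    colA π p q i = p ⟨i', h'⟩ := by
  have hl : (π (Sum.inl i)).isLeft := by rw [h]; rfl
  unfold colA
  rw [dif_pos hl]
  exact congrArg p (Subtype.ext (getLeft_of_eq h hl))

lemma colA_eq_right {i : X} {j' : Y} (h : π (Sum.inl i) = Sum.inr j')
    (p : {i : X // pP π i} → V) (q : {j : Y // pQ π j} → V) (h' : pQ π j') :
    colA π p q i = q ⟨j', h'⟩ := by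
  have hr : (π (Sum.inl i)).isRight := by rw [h]; rfl
  have hl : ¬ (π (Sum.inl i)).isLeft := Sum.not_isLeft.mpr hr
  unfold colA
  rw [dif_neg hl]
  exact congrArg q (Subtype.ext (getRight_of_eq h _))

lemma colB_eq_left {j : Y} {i' : X} (h : π (Sum.inr j) = Sum.inl i')
    (s : {i : X // ¬ pP π i} → V) (t : {j : Y // ¬ pQ π j} → V) (h' : ¬ pP π i') :
    colB π s t j = s ⟨i', h'⟩ := by
  have hl : (π (Sum.inr j)).isLeft := by rw [h]; rfl
  unfold colB
  rw [dif_pos hl]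
  exact congrArg s (Subtype.ext (getLeft_of_eq h hl))

lemma colB_eq_right {j j' : Y} (h : π (Sum.inr j) = Sum.inr j')
    (s : {i : X // ¬ pP π i} → V) (t : {j : Y // ¬ pQ π j} → V) (h' : ¬ pQ π j') :
    colB π s t j = t ⟨j', h'⟩ := by
  have hr : (π (Sum.inr j)).isRight := by rw [h]; rfl
  have hl : ¬ (π (Sum.inr j)).isLeft := Sum.not_isLeft.mpr hr
  unfold colB
  rw [dif_neg hl]
  exact congrArg t (Subtype.ext (getRight_of_eq h _))

lemma comp_inl_eq (z : X ⊕ Y → V) :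
    z ∘ Sum.inl = rowA π (fun i => z (Sum.inl i.1)) (fun i => z (Sum.inl i.1)) := by
  funext i; unfold rowA; split <;> rfl

lemma comp_inr_eq (z : X ⊕ Y → V) :
    z ∘ Sum.inr = rowB π (fun j => z (Sum.inr j.1)) (fun j => z (Sum.inr j.1)) := by
  funext j; unfold rowB; split <;> rfl

lemma comp_pi_inl_eq (z : X ⊕ Y → V) :
    (z ∘ ⇑π) ∘ Sum.inl = colA π (fun i => z (Sum.inl i.1)) (fun j => z (Sum.inr j.1)) := by
  funext i
  show z (π (Sum.inl i)) = _
  unfold colA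
  by_cases h : (π (Sum.inl i)).isLeft
  · rw [dif_pos h]
    exact congrArg z (Sum.inl_getLeft _ h).symm
  · rw [dif_neg h]
    exact congrArg z (Sum.inr_getRight _ _).symm

lemma comp_pi_inr_eq (z : X ⊕ Y → V) :
    (z ∘ ⇑π) ∘ Sum.inr = colB π (fun i => z (Sum.inl i.1)) (fun j => z (Sum.inr j.1)) := by
  funext j
  show z (π (Sum.inr j)) = _
  unfold colB
  by_cases h : (π (Sum.inr j)).isLeft
  · rw [dif_pos h]
    exact congrArg z (Sum.inl_getLeft _ h).symm
  · rw [dif_neg h]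
    exact congrArg z (Sum.inr_getRight _ _).symm

end Core

end SuperAdd



namespace SuperAdd

section Core

variable {X Y : Type} [Fintype X] [DecidableEq X] [Fintype Y] [DecidableEq Y]
variable {V : Type} [Fintype V] [DecidableEq V]
variable (π : Equiv.Perm (X ⊕ Y))


def ψ1 : {i : X // (π (Sum.inl i)).isLeft} ≃ {i : X // pP π i} where
  toFun i := ⟨(π (Sum.inl i.1)).getLeft i.2, by
    show (π.symm (Sum.inl _)).isLeft
    rw [Sum.inl_getLeft, Equiv.symm_apply_apply]; rfl⟩
  invFun i := ⟨(π.symm (Sum.inl i.1)).getLeft i.2, by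
    rw [Sum.inl_getLeft, Equiv.apply_symm_apply]; rfl⟩
  left_inv i := Subtype.ext (Sum.inl_injective (by
    rw [Sum.inl_getLeft, Sum.inl_getLeft, Equiv.symm_apply_apply]))
  right_inv i := Subtype.ext (Sum.inl_injective (by
    rw [Sum.inl_getLeft, Sum.inl_getLeft, Equiv.apply_symm_apply]))

def ψ2 : {j : Y // (π (Sum.inr j)).isLeft} ≃ {i : X // ¬ pP π i} where
  toFun j := ⟨(π (Sum.inr j.1)).getLeft j.2, by
    show ¬ (π.symm (Sum.inl _)).isLeft
    rw [Sum.inl_getLeft, Equiv.symm_apply_apply]; simp⟩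
  invFun i := ⟨(π.symm (Sum.inl i.1)).getRight (Sum.not_isLeft.mp i.2), by
    rw [Sum.inr_getRight, Equiv.apply_symm_apply]; rfl⟩
  left_inv j := Subtype.ext (Sum.inr_injective (by
    rw [Sum.inr_getRight, Sum.inl_getLeft, Equiv.symm_apply_apply]))
  right_inv i := Subtype.ext (Sum.inl_injective (by
    rw [Sum.inl_getLeft, Sum.inr_getRight, Equiv.apply_symm_apply]))

def ψ3 : {i : X // ¬ (π (Sum.inl i)).isLeft} ≃ {j : Y // pQ π j} where
  toFun i := ⟨(π (Sum.inl i.1)).getRight (Sum.not_isLeft.mp i.2), by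
    show (π.symm (Sum.inr _)).isLeft
    rw [Sum.inr_getRight, Equiv.symm_apply_apply]; rfl⟩
  invFun j := ⟨(π.symm (Sum.inr j.1)).getLeft j.2, by
    rw [Sum.inl_getLeft, Equiv.apply_symm_apply]; simp⟩
  left_inv i := Subtype.ext (Sum.inl_injective (by
    rw [Sum.inl_getLeft, Sum.inr_getRight, Equiv.symm_apply_apply]))
  right_inv j := Subtype.ext (Sum.inr_injective (by
    rw [Sum.inr_getRight, Sum.inl_getLeft, Equiv.apply_symm_apply]))

def ψ4 : {j : Y // ¬ (π (Sum.inr j)).isLeft} ≃ {j : Y // ¬ pQ π j} where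
  toFun j := ⟨(π (Sum.inr j.1)).getRight (Sum.not_isLeft.mp j.2), by
    show ¬ (π.symm (Sum.inr _)).isLeft
    rw [Sum.inr_getRight, Equiv.symm_apply_apply]; simp⟩
  invFun j := ⟨(π.symm (Sum.inr j.1)).getRight (Sum.not_isLeft.mp j.2), by
    show ¬ (π (Sum.inr _)).isLeft
    rw [Sum.inr_getRight, Equiv.apply_symm_apply]; simp⟩
  left_inv j := Subtype.ext (Sum.inr_injective (by
    rw [Sum.inr_getRight, Sum.inr_getRight, Equiv.symm_apply_apply]))
  right_inv j := Subtype.ext (Sum.inr_injective (by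
    rw [Sum.inr_getRight, Sum.inr_getRight, Equiv.apply_symm_apply]))

noncomputable def gS : {i : X // ¬ pP π i} ≃ {i : X // ¬ (π (Sum.inl i)).isLeft} :=
  Fintype.equivOfCardEq (by
    have h1 : Fintype.card {i : X // (π (Sum.inl i)).isLeft} = Fintype.card {i : X // pP π i} :=
      Fintype.card_congr (ψ1 π)
    rw [Fintype.card_subtype_compl, Fintype.card_subtype_compl, h1])

noncomputable def eE : {i : X // ¬ pP π i} ≃ {j : Y // pQ π j} :=
  (gS π).trans (ψ3 π)

noncomputable def σX : Equiv.Perm X :=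
  (Equiv.sumCompl (pP π)).symm.trans ((Equiv.sumCongr (ψ1 π).symm (gS π)).trans
    (Equiv.sumCompl (fun i => (π (Sum.inl i)).isLeft)))

noncomputable def τY : Equiv.Perm Y :=
  (Equiv.sumCompl (fun j => (π (Sum.inr j)).isLeft)).symm.trans
    ((Equiv.sumCongr ((ψ2 π).trans (eE π)) (ψ4 π)).trans
      (Equiv.sumCompl (pQ π)))

end Core

end SuperAdd

namespace SuperAdd

section Core2

variable {X Y : Type} [Fintype X] [DecidableEq X] [Fintype Y] [DecidableEq Y]
variable {V : Type} [Fintype V] [DecidableEq V]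
variable (π : Equiv.Perm (X ⊕ Y))

lemma σX_pos {i : X} (h : pP π i) : σX π i = ((ψ1 π).symm ⟨i, h⟩).1 := by
  unfold σX
  rw [Equiv.trans_apply, Equiv.trans_apply, Equiv.sumCompl_symm_apply_of_pos h,
    Equiv.sumCongr_apply, Sum.map_inl, Equiv.sumCompl_apply_inl]

lemma σX_neg {i : X} (h : ¬ pP π i) : σX π i = ((gS π) ⟨i, h⟩).1 := by
  unfold σX
  rw [Equiv.trans_apply, Equiv.trans_apply, Equiv.sumCompl_symm_apply_of_neg h,
    Equiv.sumCongr_apply, Sum.map_inr, Equiv.sumCompl_apply_inr]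

lemma τY_pos {j : Y} (h : (π (Sum.inr j)).isLeft) :
    τY π j = ((eE π) ((ψ2 π) ⟨j, h⟩)).1 := by
  unfold τY
  rw [Equiv.trans_apply, Equiv.trans_apply, Equiv.sumCompl_symm_apply_of_pos (p := fun j : Y => (π (Sum.inr j)).isLeft) h,
    Equiv.sumCongr_apply, Sum.map_inl, Equiv.sumCompl_apply_inl]
  rfl

lemma τY_neg {j : Y} (h : ¬ (π (Sum.inr j)).isLeft) :
    τY π j = ((ψ4 π) ⟨j, h⟩).1 := by
  unfold τY
  rw [Equiv.trans_apply, Equiv.trans_apply, Equiv.sumCompl_symm_apply_of_neg (p := fun j : Y => (π (Sum.inr j)).isLeft) h,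
    Equiv.sumCongr_apply, Sum.map_inr, Equiv.sumCompl_apply_inr]

lemma rowA_e (p : {i : X // pP π i} → V) (q : {j : Y // pQ π j} → V) :
    rowA π p (fun i => q (eE π i)) = (colA π p q) ∘ ⇑(σX π) := by
  funext i
  show rowA π p _ i = colA π p q (σX π i)
  by_cases h : pP π i
  · have key : π (Sum.inl (((ψ1 π).symm ⟨i, h⟩).1)) = Sum.inl i := by
      have hval : (((ψ1 π) ((ψ1 π).symm ⟨i, h⟩)).1) = i :=
        congrArg Subtype.val ((ψ1 π).apply_symm_apply ⟨i, h⟩)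
      calc π (Sum.inl (((ψ1 π).symm ⟨i, h⟩).1))
          = Sum.inl (((ψ1 π) ((ψ1 π).symm ⟨i, h⟩)).1) :=
            (Sum.inl_getLeft _ ((ψ1 π).symm ⟨i, h⟩).2).symm
        _ = Sum.inl i := by rw [hval]
    rw [σX_pos π h, colA_eq_left π key p q h]
    unfold rowA; rw [dif_pos h]
  · have key : π (Sum.inl (((gS π) ⟨i, h⟩).1)) = Sum.inr ((eE π ⟨i, h⟩).1) :=
      (Sum.inr_getRight _ _).symm
    rw [σX_neg π h, colA_eq_right π key p q (eE π ⟨i, h⟩).2]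
    unfold rowA; rw [dif_neg h]

lemma colB_e (q : {j : Y // pQ π j} → V) (t : {j : Y // ¬ pQ π j} → V) :
    colB π (fun i => q (eE π i)) t = (rowB π q t) ∘ ⇑(τY π) := by
  funext j
  show colB π _ t j = rowB π q t (τY π j)
  by_cases h : (π (Sum.inr j)).isLeft
  · have key : π (Sum.inr j) = Sum.inl ((ψ2 π ⟨j, h⟩).1) := (Sum.inl_getLeft _ h).symm
    rw [colB_eq_left π key _ t (ψ2 π ⟨j, h⟩).2, τY_pos π h]
    show q (eE π (ψ2 π ⟨j, h⟩)) = _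
    unfold rowB
    rw [dif_pos ((eE π) ((ψ2 π) ⟨j, h⟩)).2]
  · have key : π (Sum.inr j) = Sum.inr ((ψ4 π ⟨j, h⟩).1) := (Sum.inr_getRight _ _).symm
    rw [colB_eq_right π key _ t (ψ4 π ⟨j, h⟩).2, τY_neg π h]
    unfold rowB
    rw [dif_neg ((ψ4 π) ⟨j, h⟩).2]

end Core2

end SuperAdd

namespace SuperAdd

section Core3

variable {X Y : Type} [Fintype X] [DecidableEq X] [Fintype Y] [DecidableEq Y]
variable {V : Type} [Fintype V] [DecidableEq V]
variable (π : Equiv.Perm (X ⊕ Y))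

private lemma sum_rot {Sf Qf Tf : Type} [Fintype Sf] [Fintype Qf] [Fintype Tf]
    (f : Sf → Qf → Tf → ℂ) :
    (∑ s, ∑ q, ∑ t, f s q t) = ∑ t, ∑ q, ∑ s, f s q t := by
  have h1 : (∑ s, ∑ q, ∑ t, f s q t) = ∑ u : Sf × Qf × Tf, f u.1 u.2.1 u.2.2 := by
    rw [Fintype.sum_prod_type]
    exact Finset.sum_congr rfl fun s _ => by rw [Fintype.sum_prod_type]
  have h2 : (∑ t, ∑ q, ∑ s, f s q t) = ∑ u : Tf × Qf × Sf, f u.2.2 u.2.1 u.1 := by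
    rw [Fintype.sum_prod_type]
    exact Finset.sum_congr rfl fun t _ => by rw [Fintype.sum_prod_type]
  rw [h1, h2]
  exact Fintype.sum_equiv
    ⟨fun u => (u.2.2, u.2.1, u.1), fun u => (u.2.2, u.2.1, u.1), fun _ => rfl, fun _ => rfl⟩
    _ _ (fun u => rfl)

private lemma sum_pairs {Pf Sf Qf Tf : Type} [Fintype Pf] [Fintype Sf] [Fintype Qf] [Fintype Tf]
    (f : Pf → Sf → Qf → Tf → ℂ) :
    (∑ w : (Pf × Sf) × (Qf × Tf), f w.1.1 w.1.2 w.2.1 w.2.2)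
      = ∑ p, ∑ s, ∑ q, ∑ t, f p s q t := by
  simp_rw [Fintype.sum_prod_type]

def quadE : (X ⊕ Y → V) ≃
    (({i : X // pP π i} → V) × ({i : X // ¬ pP π i} → V)) ×
      (({j : Y // pQ π j} → V) × ({j : Y // ¬ pQ π j} → V)) :=
  (Equiv.sumArrowEquivProdArrow X Y V).trans
    ((Equiv.piEquivPiSubtypeProd (pP π) (fun _ => V)).prodCongr
      (Equiv.piEquivPiSubtypeProd (pQ π) (fun _ => V)))

lemma quadE_apply (z : X ⊕ Y → V) :
    quadE π z = ((fun i => z (Sum.inl i.1), fun i => z (Sum.inl i.1)),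
      (fun j => z (Sum.inr j.1), fun j => z (Sum.inr j.1))) := rfl

lemma core_nonneg (α : (X → V) → ℂ) (β : (Y → V) → ℂ)
    (hα : ∀ (σ : Equiv.Perm X) (a : X → V), α (a ∘ ⇑σ) = α a)
    (hβ : ∀ (σ : Equiv.Perm Y) (b : Y → V), β (b ∘ ⇑σ) = β b) :
    0 ≤ ∑ z : X ⊕ Y → V,
        (starRingEnd ℂ) (α (z ∘ Sum.inl)) * α ((z ∘ ⇑π) ∘ Sum.inl) *
          ((starRingEnd ℂ) (β (z ∘ Sum.inr)) * β ((z ∘ ⇑π) ∘ Sum.inr)) := by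
  classical
  set A : ({i : X // pP π i} → V) → ({i : X // ¬ pP π i} → V) → ℂ :=
    fun p s => (starRingEnd ℂ) (α (rowA π p s)) with hA
  set B : ({i : X // pP π i} → V) → ({j : Y // pQ π j} → V) → ℂ :=
    fun p q => α (colA π p q) with hB
  set C : ({j : Y // pQ π j} → V) → ({j : Y // ¬ pQ π j} → V) → ℂ :=
    fun q t => (starRingEnd ℂ) (β (rowB π q t)) with hC
  set D : ({i : X // ¬ pP π i} → V) → ({j : Y // ¬ pQ π j} → V) → ℂ :=
    fun s t => β (colB π s t) with hD
  have hterm : ∀ w, (starRingEnd ℂ) (α (((quadE π).symm w) ∘ Sum.inl)) *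
      α ((((quadE π).symm w) ∘ ⇑π) ∘ Sum.inl) *
      ((starRingEnd ℂ) (β (((quadE π).symm w) ∘ Sum.inr)) *
        β ((((quadE π).symm w) ∘ ⇑π) ∘ Sum.inr))
      = A w.1.1 w.1.2 * B w.1.1 w.2.1 * (C w.2.1 w.2.2 * D w.1.2 w.2.2) := by
    intro w
    have hw : w = ((fun i => ((quadE π).symm w) (Sum.inl i.1),
        fun i => ((quadE π).symm w) (Sum.inl i.1)),
        (fun j => ((quadE π).symm w) (Sum.inr j.1),
          fun j => ((quadE π).symm w) (Sum.inr j.1))) :=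
      ((quadE π).apply_symm_apply w).symm.trans (quadE_apply π ((quadE π).symm w))
    have h11 := congrArg (fun u => u.1.1) hw
    have h12 := congrArg (fun u => u.1.2) hw
    have h21 := congrArg (fun u => u.2.1) hw
    have h22 := congrArg (fun u => u.2.2) hw
    simp only at h11 h12 h21 h22
    simp only [hA, hB, hC, hD, h11, h12, h21, h22]
    rw [comp_inl_eq π ((quadE π).symm w), comp_inr_eq π ((quadE π).symm w),
      comp_pi_inl_eq π ((quadE π).symm w), comp_pi_inr_eq π ((quadE π).symm w)]
  have hsum : (∑ z : X ⊕ Y → V,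
        (starRingEnd ℂ) (α (z ∘ Sum.inl)) * α ((z ∘ ⇑π) ∘ Sum.inl) *
          ((starRingEnd ℂ) (β (z ∘ Sum.inr)) * β ((z ∘ ⇑π) ∘ Sum.inr)))
      = ∑ p, ∑ s, ∑ q, ∑ t, A p s * B p q * (C q t * D s t) := by
    rw [← Equiv.sum_comp (quadE π).symm (fun z =>
      (starRingEnd ℂ) (α (z ∘ Sum.inl)) * α ((z ∘ ⇑π) ∘ Sum.inl) *
        ((starRingEnd ℂ) (β (z ∘ Sum.inr)) * β ((z ∘ ⇑π) ∘ Sum.inr)))]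
    rw [← sum_pairs (fun p s q t => A p s * B p q * (C q t * D s t))]
    exact Finset.sum_congr rfl fun w _ => hterm w
  rw [hsum]
  -- regroup and exhibit squares
  have hregroup : ∀ (p : {i : X // pP π i} → V),
      (∑ s, ∑ q, ∑ t, A p s * B p q * (C q t * D s t))
        = ∑ t, (∑ q, B p q * C q t) * (∑ s, A p s * D s t) := by
    intro p
    rw [sum_rot (fun s q t => A p s * B p q * (C q t * D s t))]
    refine Finset.sum_congr rfl fun t _ => ?_
    rw [Finset.sum_mul_sum]
    refine Finset.sum_congr rfl fun q _ => Finset.sum_congr rfl fun s _ => by ring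
  have hconj : ∀ (p : {i : X // pP π i} → V) (t : {j : Y // ¬ pQ π j} → V),
      (∑ s, A p s * D s t) = (starRingEnd ℂ) (∑ q, B p q * C q t) := by
    intro p t
    rw [map_sum]
    rw [← Equiv.sum_comp (Equiv.arrowCongr (eE π).symm (Equiv.refl V))
      (fun s => A p s * D s t)]
    refine Finset.sum_congr rfl fun q _ => ?_
    have harr : (Equiv.arrowCongr (eE π).symm (Equiv.refl V)) q = fun i => q (eE π i) := rfl
    rw [harr]
    simp only [hA, hB, hC, hD]
    rw [rowA_e π p q, hα (σX π), colB_e π q t, hβ (τY π)]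
    rw [_root_.map_mul, Complex.conj_conj]
  simp_rw [hregroup, hconj]
  refine Finset.sum_nonneg fun p _ => Finset.sum_nonneg fun t _ => ?_
  rw [Complex.mul_conj]
  exact Complex.zero_le_real.mpr (Complex.normSq_nonneg _)

end Core3

end SuperAdd

namespace SuperAdd

section Mat

variable {X Y : Type} [Fintype X] [DecidableEq X] [Fintype Y] [DecidableEq Y] {d : ℕ}

lemma mul_entry (C : Matrix (X → Fin d) (X → Fin d) ℂ) (a b : X → Fin d) :
    (Cᴴ * C) a b = ∑ k, (starRingEnd ℂ) (C k a) * C k b := by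
  rw [Matrix.mul_apply]
  exact Finset.sum_congr rfl fun k _ => by rw [Matrix.conjTranspose_apply]; rfl

lemma term_nonneg (π : Equiv.Perm (X ⊕ Y))
    (C : Matrix (X → Fin d) (X → Fin d) ℂ) (D : Matrix (Y → Fin d) (Y → Fin d) ℂ)
    (hC : ∀ k (σ : Equiv.Perm X) a, C k (a ∘ ⇑σ) = C k a)
    (hD : ∀ l (σ : Equiv.Perm Y) b, D l (b ∘ ⇑σ) = D l b) :
    0 ≤ ∑ z : X ⊕ Y → Fin d, (Cᴴ * C) (z ∘ Sum.inl) ((z ∘ ⇑π) ∘ Sum.inl) *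
        (Dᴴ * D) (z ∘ Sum.inr) ((z ∘ ⇑π) ∘ Sum.inr) := by
  simp_rw [mul_entry, Finset.sum_mul_sum]
  rw [Finset.sum_comm]
  refine Finset.sum_nonneg fun k _ => ?_
  rw [Finset.sum_comm]
  refine Finset.sum_nonneg fun l _ => ?_
  exact core_nonneg π (C k) (D l) (hC k) (hD l)

lemma single_nonneg (C : Matrix (X → Fin d) (X → Fin d) ℂ)
    (hC : ∀ k (σ : Equiv.Perm X) a, C k (a ∘ ⇑σ) = C k a) (σ : Equiv.Perm X) :
    0 ≤ ∑ a : X → Fin d, (Cᴴ * C) a (a ∘ ⇑σ) := by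
  simp_rw [mul_entry]
  refine Finset.sum_nonneg fun a _ => Finset.sum_nonneg fun k _ => ?_
  rw [hC k σ a, mul_comm, Complex.mul_conj]
  exact Complex.zero_le_real.mpr (Complex.normSq_nonneg _)

lemma sum_split_prod (f : (X → Fin d) → ℂ) (g : (Y → Fin d) → ℂ) :
    (∑ z : X ⊕ Y → Fin d, f (z ∘ Sum.inl) * g (z ∘ Sum.inr))
      = (∑ a : X → Fin d, f a) * (∑ b : Y → Fin d, g b) := by
  calc (∑ z : X ⊕ Y → Fin d, f (z ∘ Sum.inl) * g (z ∘ Sum.inr))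
      = ∑ ab : (X → Fin d) × (Y → Fin d), f ab.1 * g ab.2 :=
        Fintype.sum_equiv (Equiv.sumArrowEquivProdArrow X Y (Fin d)) _ _ (fun z => rfl)
    _ = ∑ a : X → Fin d, ∑ b : Y → Fin d, f a * g b := Fintype.sum_prod_type _
    _ = (∑ a : X → Fin d, f a) * (∑ b : Y → Fin d, g b) := (Finset.sum_mul_sum _ _ _ _).symm

lemma sum_sumCongr (ρ1 : Matrix (X → Fin d) (X → Fin d) ℂ)
    (ρ2 : Matrix (Y → Fin d) (Y → Fin d) ℂ) (σ : Equiv.Perm X) (τ : Equiv.Perm Y) :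
    (∑ z : X ⊕ Y → Fin d,
        ρ1 (z ∘ Sum.inl) ((z ∘ ⇑(Equiv.sumCongr σ τ)) ∘ Sum.inl) *
          ρ2 (z ∘ Sum.inr) ((z ∘ ⇑(Equiv.sumCongr σ τ)) ∘ Sum.inr))
      = (∑ a : X → Fin d, ρ1 a (a ∘ ⇑σ)) * (∑ b : Y → Fin d, ρ2 b (b ∘ ⇑τ)) := by
  rw [← sum_split_prod (fun a => ρ1 a (a ∘ ⇑σ)) (fun b => ρ2 b (b ∘ ⇑τ))]
  exact Finset.sum_congr rfl fun z _ => rfl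

lemma rows_symm (B : Matrix (X → Fin d) (X → Fin d) ℂ) :
    ∀ k (σ : Equiv.Perm X) (a : X → Fin d),
      (B * permSum X d) k (a ∘ ⇑σ) = (B * permSum X d) k a := by
  intro k σ a
  rw [Matrix.mul_apply, Matrix.mul_apply]
  exact Finset.sum_congr rfl fun c _ => by rw [permSum_comp_right]

lemma sandwich_eq (B : Matrix (X → Fin d) (X → Fin d) ℂ) :
    permSum X d * (Bᴴ * B) * permSum X d = (B * permSum X d)ᴴ * (B * permSum X d) := by
  rw [Matrix.conjTranspose_mul, permSum_conjTranspose]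
  rw [Matrix.mul_assoc (permSum X d) Bᴴ, ← Matrix.mul_assoc, ← Matrix.mul_assoc,
    ← Matrix.mul_assoc]

end Mat

end SuperAdd

namespace SuperAdd

section TC

variable {d x y : ℕ}

lemma tensorCopies_mul (A B : Matrix (Fin x → Fin d) (Fin x → Fin d) ℂ)
    (A' B' : Matrix (Fin y → Fin d) (Fin y → Fin d) ℂ) :
    tensorCopies (A * B) (A' * B') = tensorCopies A A' * tensorCopies B B' := by
  ext z w
  rw [Matrix.mul_apply]
  show (A * B) (z ∘ Sum.inl) (w ∘ Sum.inl) * (A' * B') (z ∘ Sum.inr) (w ∘ Sum.inr) = _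
  rw [Matrix.mul_apply, Matrix.mul_apply, Finset.sum_mul_sum]
  have h1 : (∑ a : Fin x → Fin d, ∑ b : Fin y → Fin d,
        A (z ∘ Sum.inl) a * B a (w ∘ Sum.inl) * (A' (z ∘ Sum.inr) b * B' b (w ∘ Sum.inr)))
      = ∑ ab : (Fin x → Fin d) × (Fin y → Fin d),
          A (z ∘ Sum.inl) ab.1 * B ab.1 (w ∘ Sum.inl) *
            (A' (z ∘ Sum.inr) ab.2 * B' ab.2 (w ∘ Sum.inr)) :=
    (Fintype.sum_prod_type (fun ab => A (z ∘ Sum.inl) ab.1 * B ab.1 (w ∘ Sum.inl) *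
            (A' (z ∘ Sum.inr) ab.2 * B' ab.2 (w ∘ Sum.inr)))).symm
  rw [h1]
  have h2 : (∑ ab : (Fin x → Fin d) × (Fin y → Fin d),
          A (z ∘ Sum.inl) ab.1 * B ab.1 (w ∘ Sum.inl) *
            (A' (z ∘ Sum.inr) ab.2 * B' ab.2 (w ∘ Sum.inr)))
      = ∑ c : Fin x ⊕ Fin y → Fin d,
          A (z ∘ Sum.inl) (c ∘ Sum.inl) * B (c ∘ Sum.inl) (w ∘ Sum.inl) *
            (A' (z ∘ Sum.inr) (c ∘ Sum.inr) * B' (c ∘ Sum.inr) (w ∘ Sum.inr)) :=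
    (Fintype.sum_equiv (Equiv.sumArrowEquivProdArrow (Fin x) (Fin y) (Fin d))
      (fun c => A (z ∘ Sum.inl) (c ∘ Sum.inl) * B (c ∘ Sum.inl) (w ∘ Sum.inl) *
            (A' (z ∘ Sum.inr) (c ∘ Sum.inr) * B' (c ∘ Sum.inr) (w ∘ Sum.inr)))
      (fun ab => A (z ∘ Sum.inl) ab.1 * B ab.1 (w ∘ Sum.inl) *
            (A' (z ∘ Sum.inr) ab.2 * B' ab.2 (w ∘ Sum.inr)))
      (fun c => rfl)).symm
  rw [h2]
  refine Finset.sum_congr rfl fun c _ => ?_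
  show _ = (_ : ℂ) * _ * (_ * _)
  ring

lemma tensorCopies_permMat (σ : Equiv.Perm (Fin x)) (τ : Equiv.Perm (Fin y)) :
    tensorCopies (permMat (Fin x) d σ) (permMat (Fin y) d τ)
      = permMat (Fin x ⊕ Fin y) d (Equiv.sumCongr σ τ) := by
  ext z w
  show (if z ∘ Sum.inl = (w ∘ Sum.inl) ∘ ⇑σ then (1:ℂ) else 0) *
      (if z ∘ Sum.inr = (w ∘ Sum.inr) ∘ ⇑τ then (1:ℂ) else 0)
      = if z = w ∘ ⇑(Equiv.sumCongr σ τ) then 1 else 0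
  by_cases h : z = w ∘ ⇑(Equiv.sumCongr σ τ)
  · rw [if_pos h]
    subst h
    have e1 : (w ∘ ⇑(Equiv.sumCongr σ τ)) ∘ Sum.inl = (w ∘ Sum.inl) ∘ ⇑σ := rfl
    have e2 : (w ∘ ⇑(Equiv.sumCongr σ τ)) ∘ Sum.inr = (w ∘ Sum.inr) ∘ ⇑τ := rfl
    rw [if_pos e1, if_pos e2, one_mul]
  · rw [if_neg h]
    by_cases h1 : z ∘ Sum.inl = (w ∘ Sum.inl) ∘ ⇑σ
    · rw [if_pos h1, one_mul, if_neg]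
      intro h2
      exact h (funext fun u => by
        cases u with
        | inl i => exact congrFun h1 i
        | inr j => exact congrFun h2 j)
    · rw [if_neg h1, zero_mul]

lemma tensorCopies_permSum :
    tensorCopies (permSum (Fin x) d) (permSum (Fin y) d)
      = ∑ σ : Equiv.Perm (Fin x), ∑ τ : Equiv.Perm (Fin y),
          permMat (Fin x ⊕ Fin y) d (Equiv.sumCongr σ τ) := by
  ext z w
  show (permSum (Fin x) d) (z ∘ Sum.inl) (w ∘ Sum.inl) *
      (permSum (Fin y) d) (z ∘ Sum.inr) (w ∘ Sum.inr) = _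
  rw [permSum_eq, permSum_eq, Matrix.sum_apply, Matrix.sum_apply, Finset.sum_mul_sum]
  simp_rw [Matrix.sum_apply]
  refine Finset.sum_congr rfl fun σ _ => Finset.sum_congr rfl fun τ _ => ?_
  rw [← tensorCopies_permMat σ τ]
  rfl

lemma tc_mul_permSum :
    tensorCopies (permSum (Fin x) d) (permSum (Fin y) d) * permSum (Fin x ⊕ Fin y) d
      = ((Fintype.card (Equiv.Perm (Fin x)) * Fintype.card (Equiv.Perm (Fin y)) : ℕ) : ℂ) •
          permSum (Fin x ⊕ Fin y) d := by
  rw [tensorCopies_permSum, Finset.sum_mul]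
  simp_rw [Finset.sum_mul, permMat_mul_permSum]
  rw [Finset.sum_const, Finset.sum_const, Finset.card_univ, Finset.card_univ, smul_smul,
    Nat.cast_smul_eq_nsmul]

lemma permSum_mul_tc :
    permSum (Fin x ⊕ Fin y) d * tensorCopies (permSum (Fin x) d) (permSum (Fin y) d)
      = ((Fintype.card (Equiv.Perm (Fin x)) * Fintype.card (Equiv.Perm (Fin y)) : ℕ) : ℂ) •
          permSum (Fin x ⊕ Fin y) d := by
  rw [tensorCopies_permSum, Finset.mul_sum]
  simp_rw [Finset.mul_sum, permSum_mul_permMat]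
  rw [Finset.sum_const, Finset.sum_const, Finset.card_univ, Finset.card_univ, smul_smul,
    Nat.cast_smul_eq_nsmul]

end TC

end SuperAdd

open SuperAdd

/-- **Superadditivity of permutation-sum traces.** For positive semidefinite
`ρx` on `x` copies and `ρy` on `y` copies of `C^d`,
`tr((ρx ⊗ ρy)·S_{x+y}) ≥ tr(ρx·S_x)·tr(ρy·S_y)`. -/
theorem trace_tensor_permSum_ge {d x y : ℕ}
    (ρx : Matrix (Fin x → Fin d) (Fin x → Fin d) ℂ)
    (ρy : Matrix (Fin y → Fin d) (Fin y → Fin d) ℂ)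
    (hx : ρx.PosSemidef) (hy : ρy.PosSemidef) :
    ((ρx * permSum (Fin x) d).trace).re * ((ρy * permSum (Fin y) d).trace).re
      ≤ ((tensorCopies ρx ρy * permSum (Fin x ⊕ Fin y) d).trace).re := by
  classical
  open scoped MatrixOrder in
  obtain ⟨Bx, hBx⟩ := CStarAlgebra.nonneg_iff_eq_star_mul_self.mp hx.nonneg
  open scoped MatrixOrder in
  obtain ⟨By, hBy⟩ := CStarAlgebra.nonneg_iff_eq_star_mul_self.mp hy.nonneg
  set Cx := Bx * permSum (Fin x) d with hCxdef
  set Cy := By * permSum (Fin y) d with hCydef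
  have hρx' : permSum (Fin x) d * ρx * permSum (Fin x) d = Cxᴴ * Cx := by
    rw [hBx]; exact sandwich_eq Bx
  have hρy' : permSum (Fin y) d * ρy * permSum (Fin y) d = Cyᴴ * Cy := by
    rw [hBy]; exact sandwich_eq By
  have hCxsym := rows_symm (d := d) Bx
  have hCysym := rows_symm (d := d) By
  -- scaled traces for the single systems
  have hTrScale : ∀ (κ : Type) [DecidableEq κ] [Fintype κ]
      (ρ : Matrix (κ → Fin d) (κ → Fin d) ℂ),
      ((permSum κ d * ρ * permSum κ d) * permSum κ d).trace
        = ((Fintype.card (Equiv.Perm κ) : ℂ)) *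
            (((Fintype.card (Equiv.Perm κ) : ℂ)) * (ρ * permSum κ d).trace) := by
    intro κ _ _ ρ
    calc ((permSum κ d * ρ * permSum κ d) * permSum κ d).trace
        = (permSum κ d * ρ * (permSum κ d * permSum κ d)).trace := by
          rw [Matrix.mul_assoc (permSum κ d * ρ)]
      _ = ((Fintype.card (Equiv.Perm κ) : ℂ)) * ((permSum κ d * ρ * permSum κ d)).trace := by
          rw [permSum_mul_permSum, Matrix.mul_smul, Matrix.trace_smul, smul_eq_mul,
            Matrix.mul_assoc]
      _ = ((Fintype.card (Equiv.Perm κ) : ℂ)) *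
            (((Fintype.card (Equiv.Perm κ) : ℂ)) * (ρ * permSum κ d).trace) := by
          congr 1
          calc (permSum κ d * ρ * permSum κ d).trace
              = (permSum κ d * (ρ * permSum κ d)).trace := by rw [Matrix.mul_assoc]
            _ = ((ρ * permSum κ d) * permSum κ d).trace := Matrix.trace_mul_comm _ _
            _ = (ρ * (permSum κ d * permSum κ d)).trace := by rw [Matrix.mul_assoc]
            _ = ((Fintype.card (Equiv.Perm κ) : ℂ)) * (ρ * permSum κ d).trace := by
                rw [permSum_mul_permSum, Matrix.mul_smul, Matrix.trace_smul, smul_eq_mul]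
  have hTx : ((Cxᴴ * Cx) * permSum (Fin x) d).trace
      = ((Fintype.card (Equiv.Perm (Fin x)) : ℂ)) *
          (((Fintype.card (Equiv.Perm (Fin x)) : ℂ)) * (ρx * permSum (Fin x) d).trace) := by
    rw [← hρx']; exact hTrScale (Fin x) ρx
  have hTy : ((Cyᴴ * Cy) * permSum (Fin y) d).trace
      = ((Fintype.card (Equiv.Perm (Fin y)) : ℂ)) *
          (((Fintype.card (Equiv.Perm (Fin y)) : ℂ)) * (ρy * permSum (Fin y) d).trace) := by
    rw [← hρy']; exact hTrScale (Fin y) ρy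
  -- scaled trace for the joint system
  have hTC : tensorCopies (Cxᴴ * Cx) (Cyᴴ * Cy)
      = tensorCopies (permSum (Fin x) d) (permSum (Fin y) d) * tensorCopies ρx ρy *
          tensorCopies (permSum (Fin x) d) (permSum (Fin y) d) := by
    rw [← hρx', ← hρy']
    rw [tensorCopies_mul (permSum (Fin x) d * ρx) (permSum (Fin x) d)
      (permSum (Fin y) d * ρy) (permSum (Fin y) d)]
    rw [tensorCopies_mul (permSum (Fin x) d) ρx (permSum (Fin y) d) ρy]
  have hTxy : (tensorCopies (Cxᴴ * Cx) (Cyᴴ * Cy) * permSum (Fin x ⊕ Fin y) d).trace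
      = ((Fintype.card (Equiv.Perm (Fin x)) * Fintype.card (Equiv.Perm (Fin y)) : ℕ) : ℂ) *
          (((Fintype.card (Equiv.Perm (Fin x)) * Fintype.card (Equiv.Perm (Fin y)) : ℕ) : ℂ) *
            (tensorCopies ρx ρy * permSum (Fin x ⊕ Fin y) d).trace) := by
    rw [hTC]
    calc ((tensorCopies (permSum (Fin x) d) (permSum (Fin y) d) * tensorCopies ρx ρy *
            tensorCopies (permSum (Fin x) d) (permSum (Fin y) d)) *
              permSum (Fin x ⊕ Fin y) d).trace
        = ((tensorCopies (permSum (Fin x) d) (permSum (Fin y) d) * tensorCopies ρx ρy) *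
            (tensorCopies (permSum (Fin x) d) (permSum (Fin y) d) *
              permSum (Fin x ⊕ Fin y) d)).trace := by
          rw [Matrix.mul_assoc (tensorCopies (permSum (Fin x) d) (permSum (Fin y) d) *
            tensorCopies ρx ρy)]
      _ = ((Fintype.card (Equiv.Perm (Fin x)) * Fintype.card (Equiv.Perm (Fin y)) : ℕ) : ℂ) *
            ((tensorCopies (permSum (Fin x) d) (permSum (Fin y) d) * tensorCopies ρx ρy *
              permSum (Fin x ⊕ Fin y) d).trace) := by
          rw [tc_mul_permSum, Matrix.mul_smul, Matrix.trace_smul, smul_eq_mul,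
            Matrix.mul_assoc]
      _ = ((Fintype.card (Equiv.Perm (Fin x)) * Fintype.card (Equiv.Perm (Fin y)) : ℕ) : ℂ) *
            (((Fintype.card (Equiv.Perm (Fin x)) * Fintype.card (Equiv.Perm (Fin y)) : ℕ) : ℂ) *
              (tensorCopies ρx ρy * permSum (Fin x ⊕ Fin y) d).trace) := by
          congr 1
          calc (tensorCopies (permSum (Fin x) d) (permSum (Fin y) d) * tensorCopies ρx ρy *
                permSum (Fin x ⊕ Fin y) d).trace
              = (tensorCopies (permSum (Fin x) d) (permSum (Fin y) d) *
                  (tensorCopies ρx ρy * permSum (Fin x ⊕ Fin y) d)).trace := by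
                rw [Matrix.mul_assoc]
            _ = ((tensorCopies ρx ρy * permSum (Fin x ⊕ Fin y) d) *
                  tensorCopies (permSum (Fin x) d) (permSum (Fin y) d)).trace :=
                Matrix.trace_mul_comm _ _
            _ = (tensorCopies ρx ρy * (permSum (Fin x ⊕ Fin y) d *
                  tensorCopies (permSum (Fin x) d) (permSum (Fin y) d))).trace := by
                rw [Matrix.mul_assoc]
            _ = ((Fintype.card (Equiv.Perm (Fin x)) * Fintype.card (Equiv.Perm (Fin y)) : ℕ) : ℂ) *
                  (tensorCopies ρx ρy * permSum (Fin x ⊕ Fin y) d).trace := by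
                rw [permSum_mul_tc, Matrix.mul_smul, Matrix.trace_smul, smul_eq_mul]
  -- positivity of the sandwiched single traces
  have hTxpos : 0 ≤ ((Cxᴴ * Cx) * permSum (Fin x) d).trace := by
    rw [trace_mul_permSum]
    exact Finset.sum_nonneg fun σ _ => single_nonneg Cx hCxsym σ
  have hTypos : 0 ≤ ((Cyᴴ * Cy) * permSum (Fin y) d).trace := by
    rw [trace_mul_permSum]
    exact Finset.sum_nonneg fun σ _ => single_nonneg Cy hCysym σ
  -- the complex inequality for the sandwiched matrices
  have hinj : Function.Injective
      (fun στ : Equiv.Perm (Fin x) × Equiv.Perm (Fin y) => Equiv.sumCongr στ.1 στ.2) := by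
    intro a b h
    refine Prod.ext (Equiv.ext fun i => ?_) (Equiv.ext fun j => ?_)
    · have := DFunLike.congr_fun h (Sum.inl i)
      simpa using this
    · have := DFunLike.congr_fun h (Sum.inr j)
      simpa using this
  have hmain : ((Cxᴴ * Cx) * permSum (Fin x) d).trace * ((Cyᴴ * Cy) * permSum (Fin y) d).trace
      ≤ (tensorCopies (Cxᴴ * Cx) (Cyᴴ * Cy) * permSum (Fin x ⊕ Fin y) d).trace := by
    rw [trace_mul_permSum, trace_mul_permSum, trace_mul_permSum]
    have step1 : (∑ σ : Equiv.Perm (Fin x), ∑ a : Fin x → Fin d, (Cxᴴ * Cx) a (a ∘ ⇑σ)) *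
        (∑ τ : Equiv.Perm (Fin y), ∑ b : Fin y → Fin d, (Cyᴴ * Cy) b (b ∘ ⇑τ))
        = ∑ στ : Equiv.Perm (Fin x) × Equiv.Perm (Fin y),
            ∑ z : Fin x ⊕ Fin y → Fin d,
              tensorCopies (Cxᴴ * Cx) (Cyᴴ * Cy) z (z ∘ ⇑(Equiv.sumCongr στ.1 στ.2)) := by
      rw [Finset.sum_mul_sum]
      rw [← Fintype.sum_prod_type' ]
      exact Finset.sum_congr rfl fun στ _ =>
        (sum_sumCongr (Cxᴴ * Cx) (Cyᴴ * Cy) στ.1 στ.2).symm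
    rw [step1]
    have step2 : (∑ στ : Equiv.Perm (Fin x) × Equiv.Perm (Fin y),
            ∑ z : Fin x ⊕ Fin y → Fin d,
              tensorCopies (Cxᴴ * Cx) (Cyᴴ * Cy) z (z ∘ ⇑(Equiv.sumCongr στ.1 στ.2)))
        = ∑ π ∈ Finset.univ.image
            (fun στ : Equiv.Perm (Fin x) × Equiv.Perm (Fin y) => Equiv.sumCongr στ.1 στ.2),
            ∑ z : Fin x ⊕ Fin y → Fin d,
              tensorCopies (Cxᴴ * Cx) (Cyᴴ * Cy) z (z ∘ ⇑π) := by
      rw [Finset.sum_image (fun a _ b _ hab => hinj hab)]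
    rw [step2]
    refine Finset.sum_le_sum_of_subset_of_nonneg (Finset.subset_univ _) fun π _ _ => ?_
    exact term_nonneg π Cx Cy hCxsym hCysym
  -- pass to real parts
  have hximz : ((Cxᴴ * Cx) * permSum (Fin x) d).trace.im = 0 := by
    have := (Complex.le_def.mp hTxpos).2
    simpa using this.symm
  have hre : ((Cxᴴ * Cx) * permSum (Fin x) d).trace.re *
      ((Cyᴴ * Cy) * permSum (Fin y) d).trace.re
      ≤ (tensorCopies (Cxᴴ * Cx) (Cyᴴ * Cy) * permSum (Fin x ⊕ Fin y) d).trace.re := by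
    have h1 := (Complex.le_def.mp hmain).1
    rw [Complex.mul_re, hximz, zero_mul, sub_zero] at h1
    exact h1
  -- unfold the scalings in the real parts
  have hTxre : ((Cxᴴ * Cx) * permSum (Fin x) d).trace.re
      = ((Fintype.card (Equiv.Perm (Fin x)) : ℝ)) *
          (((Fintype.card (Equiv.Perm (Fin x)) : ℝ)) * (ρx * permSum (Fin x) d).trace.re) := by
    rw [hTx]
    simp [Complex.mul_re]
  have hTyre : ((Cyᴴ * Cy) * permSum (Fin y) d).trace.re
      = ((Fintype.card (Equiv.Perm (Fin y)) : ℝ)) *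
          (((Fintype.card (Equiv.Perm (Fin y)) : ℝ)) * (ρy * permSum (Fin y) d).trace.re) := by
    rw [hTy]
    simp [Complex.mul_re]
  have hTxyre : (tensorCopies (Cxᴴ * Cx) (Cyᴴ * Cy) * permSum (Fin x ⊕ Fin y) d).trace.re
      = ((Fintype.card (Equiv.Perm (Fin x)) : ℝ) * (Fintype.card (Equiv.Perm (Fin y)) : ℝ)) *
          (((Fintype.card (Equiv.Perm (Fin x)) : ℝ) * (Fintype.card (Equiv.Perm (Fin y)) : ℝ)) *
            (tensorCopies ρx ρy * permSum (Fin x ⊕ Fin y) d).trace.re) := by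
    rw [hTxy]
    push_cast
    simp [Complex.mul_re]
  rw [hTxre, hTyre, hTxyre] at hre
  have hmpos : (0 : ℝ) < (Fintype.card (Equiv.Perm (Fin x)) : ℝ) := by
    exact_mod_cast Fintype.card_pos
  have hnpos : (0 : ℝ) < (Fintype.card (Equiv.Perm (Fin y)) : ℝ) := by
    exact_mod_cast Fintype.card_pos
  set m := (Fintype.card (Equiv.Perm (Fin x)) : ℝ)
  set n := (Fintype.card (Equiv.Perm (Fin y)) : ℝ)
  set a := (ρx * permSum (Fin x) d).trace.re
  set b := (ρy * permSum (Fin y) d).trace.re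
  set c := (tensorCopies ρx ρy * permSum (Fin x ⊕ Fin y) d).trace.re
  have h2 : (m * n) ^ 2 * (a * b) ≤ (m * n) ^ 2 * c := by
    calc (m * n) ^ 2 * (a * b) = (m * (m * a)) * (n * (n * b)) := by ring
      _ ≤ (m * n) * ((m * n) * c) := hre
      _ = (m * n) ^ 2 * c := by ring
  have hsq : (0 : ℝ) < (m * n) ^ 2 := by positivity
  exact le_of_mul_le_mul_left h2 hsq
end
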